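/- arXiv:2306.12543 — 6 statements merged into one kernel-verified Lean document; each statement's English description precedes it below -/
import Mathlib

section
/- Let M be a matroid on ground set E and let N be a matroid whose ground set is the set of circuits of M. Assume that for every perfect collection 𝒞' of circuits of M, every circuit C of M with C ⊆ ∪𝒞' satisfies C ∈ cl_N(𝒞'). Then the function r : 2^E → ℤ defined, for all X ⊆ E, by r(X) = r_M(X) + r_N({C : C is a circuit of M with C ⊆ X}) is the rank function of a matroid L on E, and L is a rank-r_N(E(N)) lift of M. -/
open Set Matroid
open scoped Matroid

namespace PaperLift

variable {α : Type} {β : Type}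

/-- A circuit of a matroid: a minimal dependent set. -/
def Circuit (M : Matroid α) (C : Set α) : Prop :=
  M.Dep C ∧ ∀ D, D ⊂ C → M.Indep D

/-- The rank of a set in a matroid: the supremum of cardinalities of independent subsets. -/
noncomputable def rk (M : Matroid α) (X : Set α) : ℕ :=
  sSup {n | ∃ I, M.Indep I ∧ I ⊆ X ∧ I.ncard = n}

/-- The rank of a matroid. -/
noncomputable def rank (M : Matroid α) : ℕ := rk M M.E

/-- Deletion of a set from a matroid. -/
def delete (M : Matroid α) (D : Set α) : Matroid α := M ↾ (M.E \ D)

/-- Contraction of a set in a matroid, defined by duality. -/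
noncomputable def contract (M : Matroid α) (C : Set α) : Matroid α := ((M✶) ↾ (M.E \ C))✶

/-- A hyperplane: a maximal proper flat. -/
def Hyperplane (M : Matroid α) (H : Set α) : Prop :=
  M.IsFlat H ∧ H ≠ M.E ∧ ∀ F, M.IsFlat F → H ⊂ F → F = M.E

/-- A circuit-hyperplane: a circuit that is also a hyperplane. -/
def CircuitHyperplane (M : Matroid α) (C : Set α) : Prop :=
  Circuit M C ∧ Hyperplane M C

/-- `L` is a lift of `M`: there is a matroid `K` on a ground set `E ∪ F`, with `F` disjoint
from `E = M.E`, such that `M = K / F` and `L = K \ F` (up to the canonical embedding). -/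
def IsLiftOf (L M : Matroid α) : Prop :=
  L.E = M.E ∧ ∃ (β : Type) (K : Matroid (α ⊕ β)) (F : Set (α ⊕ β)),
    Disjoint (Sum.inl '' M.E) F ∧ K.E = Sum.inl '' M.E ∪ F ∧
    contract K F = M.map Sum.inl Sum.inl_injective.injOn ∧
    delete K F = L.map Sum.inl Sum.inl_injective.injOn

/-- `N`, a matroid whose ground set is the set of circuits of `M`, satisfies the lift
condition for `M`. -/
def LiftCondition (M : Matroid α) (N : Matroid (Set α)) : Prop :=
  N.E = {C | Circuit M C} ∧
  ∀ C₁ C₂, Circuit M C₁ → Circuit M C₂ →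
    (C₁ ∪ C₂).ncard = rk M (C₁ ∪ C₂) + 2 →
    ∀ C, Circuit M C → C ⊆ C₁ ∪ C₂ → C ∈ N.closure {C₁, C₂}

/-- `L` has the rank function of the lift `M^N` of `M` constructed from `N`. -/
def IsLiftMatroid (M : Matroid α) (N : Matroid (Set α)) (L : Matroid α) : Prop :=
  L.E = M.E ∧ ∀ X ⊆ M.E, rk L X = rk M X + rk N {C | Circuit M C ∧ C ⊆ X}

/-- Matroid isomorphism: a bijection between ground sets preserving independence
in both directions. -/
def Iso (M : Matroid α) (N : Matroid β) : Prop :=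
  ∃ e : α → β, InjOn e M.E ∧ e '' M.E = N.E ∧ ∀ I ⊆ M.E, (M.Indep I ↔ N.Indep (e '' I))

/-- Representability of a matroid over a field `F`. -/
def Representable (M : Matroid α) (F : Type) [Field F] : Prop :=
  ∃ (W : Type) (_ : AddCommGroup W) (_ : Module F W) (φ : α → W),
    ∀ I ⊆ M.E, (M.Indep I ↔ InjOn φ I ∧ LinearIndependent F (fun e : I => φ e))

/-- A rank-`r` matroid is sparse paving if every `r`-element subset of the ground set is
either a base or a circuit-hyperplane. -/
def SparsePaving (M : Matroid α) : Prop :=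
  ∀ S ⊆ M.E, S.ncard = rank M → (M.IsBase S ∨ CircuitHyperplane M S)

/-- A perfect collection of circuits. -/
def Perfect (M : Matroid α) (Cs : Set (Set α)) : Prop :=
  Cs.Finite ∧ (∀ C ∈ Cs, Circuit M C) ∧
  (⋃₀ Cs).ncard = rk M (⋃₀ Cs) + Cs.ncard ∧
  ∀ C ∈ Cs, ¬ C ⊆ ⋃₀ (Cs \ {C})

/-- A linear class of circuits. -/
def LinearClass (M : Matroid α) (𝒞 : Set (Set α)) : Prop :=
  (∀ C ∈ 𝒞, Circuit M C) ∧
  ∀ C₁ ∈ 𝒞, ∀ C₂ ∈ 𝒞, (C₁ ∪ C₂).ncard = rk M (C₁ ∪ C₂) + 2 →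
    ∀ C, Circuit M C → C ⊆ C₁ ∪ C₂ → C ∈ 𝒞

/-- The circulant sets `C_i ⊆ [2t]` from the construction of `K(r,t)`. -/
def Ci (r t i : ℕ) : Set ℕ :=
  (fun k => (k + 2 * (i - 1) - 1) % (2 * t) + 1) '' (Set.Icc 1 (r - 2))

/-- The family `𝒞'(r,t)`. -/
def CC' (r t : ℕ) : Set (Set ℕ) :=
  (fun i => Ci r t i ∪ {2 * t + 1, 2 * t + 2}) '' (Set.Icc 1 t)

/-- The family `𝒞''(r,t)`. -/
def CC'' (r t : ℕ) : Set (Set ℕ) :=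
  (fun i => Ci r t i ∪ Ci r t (i + 1)) '' (Set.Icc 1 (t - 1))

/-- `K` is the matroid `K(r,t)`: a rank-`r` matroid on `[2t+2]` in which every `r`-element
subset is a base or a circuit-hyperplane, whose circuit-hyperplanes are exactly the members
of `𝒞'(r,t) ∪ 𝒞''(r,t)`. -/
def IsKrt (r t : ℕ) (K : Matroid ℕ) : Prop :=
  K.E = Set.Icc 1 (2 * t + 2) ∧ rank K = r ∧
  (∀ S ⊆ K.E, S.ncard = r → (K.IsBase S ∨ CircuitHyperplane K S)) ∧
  (∀ S, CircuitHyperplane K S ↔ S ∈ CC' r t ∪ CC'' r t)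

/-- A group partition: a partition of the non-identity elements such that each part
together with the identity is a subgroup. -/
def GroupPartition (Γ : Type) [Group Γ] (𝒜 : Set (Set Γ)) : Prop :=
  (∀ A ∈ 𝒜, A.Nonempty) ∧ (⋃₀ 𝒜 = {(1 : Γ)}ᶜ) ∧
  (∀ A ∈ 𝒜, ∀ B ∈ 𝒜, A ≠ B → Disjoint A B) ∧
  (∀ A ∈ 𝒜, ∃ H : Subgroup Γ, (H : Set Γ) = insert 1 A)


section RkBasics

variable {γ : Type} {Q : Matroid γ} {I J X Y A D : Set γ} {e c c' : γ}

lemma rk_eq_of_isGreatest {n : ℕ}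
    (hg : IsGreatest {n | ∃ I, Q.Indep I ∧ I ⊆ X ∧ I.ncard = n} n) : rk Q X = n :=
  hg.csSup_eq

lemma indep_ncard_le_of_basis' (hfin : Q.E.Finite) (hJ : Q.IsBasis' J X)
    (hI : Q.Indep I) (hIX : I ⊆ X) : I.ncard ≤ J.ncard := by
  by_contra hlt
  push_neg at hlt
  have hJfin : J.Finite := hfin.subset hJ.indep.subset_ground
  have hIfin : I.Finite := hfin.subset hI.subset_ground
  have henc : J.encard < I.encard := by
    rw [← hJfin.cast_ncard_eq, ← hIfin.cast_ncard_eq]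
    exact_mod_cast hlt
  obtain ⟨x, hx, hxi⟩ := hJ.indep.augment hI henc
  exact hJ.insert_not_indep ⟨hIX hx.1, hx.2⟩ hxi

lemma rk_eq_ncard_of_basis' (hfin : Q.E.Finite) (hJ : Q.IsBasis' J X) :
    rk Q X = J.ncard :=
  rk_eq_of_isGreatest ⟨⟨J, hJ.indep, hJ.subset, rfl⟩,
    by rintro n ⟨I, hI, hIX, rfl⟩; exact indep_ncard_le_of_basis' hfin hJ hI hIX⟩

lemma le_rk (hfin : Q.E.Finite) (hI : Q.Indep I) (hIX : I ⊆ X) : I.ncard ≤ rk Q X := by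
  obtain ⟨J, hJ⟩ := Q.exists_isBasis' X
  rw [rk_eq_ncard_of_basis' hfin hJ]
  exact indep_ncard_le_of_basis' hfin hJ hI hIX

lemma rk_indep (hfin : Q.E.Finite) (hI : Q.Indep I) : rk Q I = I.ncard :=
  rk_eq_ncard_of_basis' hfin hI.isBasis_self.isBasis'

lemma rk_mono (hfin : Q.E.Finite) (hXY : X ⊆ Y) : rk Q X ≤ rk Q Y := by
  obtain ⟨I, hI⟩ := Q.exists_isBasis' X
  rw [rk_eq_ncard_of_basis' hfin hI]
  exact le_rk hfin hI.indep (hI.subset.trans hXY)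

lemma rk_empty (hfin : Q.E.Finite) : rk Q ∅ = 0 := by
  rw [rk_indep hfin Q.empty_indep, Set.ncard_empty]

lemma rk_le_ncard (hfin : Q.E.Finite) (hX : X.Finite) : rk Q X ≤ X.ncard := by
  obtain ⟨J, hJ⟩ := Q.exists_isBasis' X
  rw [rk_eq_ncard_of_basis' hfin hJ]
  exact Set.ncard_le_ncard hJ.subset hX

lemma rk_insert_le (hfin : Q.E.Finite) : rk Q (insert e X) ≤ rk Q X + 1 := by
  obtain ⟨J, hJ⟩ := Q.exists_isBasis' (insert e X)
  rw [rk_eq_ncard_of_basis' hfin hJ]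
  have hJfin : J.Finite := hfin.subset hJ.indep.subset_ground
  have h1 : Q.Indep (J \ {e}) := hJ.indep.subset diff_subset
  have h2 : J \ {e} ⊆ X := by
    rintro x ⟨hx, hxe⟩
    rcases hJ.subset hx with h | h
    · exact absurd h hxe
    · exact h
  have h3 := le_rk hfin h1 h2
  have h4 : J.ncard ≤ (J \ {e}).ncard + 1 := by
    by_cases heJ : e ∈ J
    · rw [Set.ncard_diff_singleton_add_one heJ hJfin]
    · rw [Set.diff_singleton_eq_self heJ]
      omega
  omega

lemma rk_le_of_subset_closure (hfin : Q.E.Finite) (hXY : X ⊆ Q.closure Y) :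
    rk Q X ≤ rk Q Y := by
  obtain ⟨J, hJ⟩ := Q.exists_isBasis' Y
  have hclJ : Q.closure J = Q.closure Y := by
    rw [← Q.closure_inter_ground Y, hJ.isBasis_inter_ground.closure_eq_closure]
  rw [rk_eq_ncard_of_basis' hfin hJ]
  obtain ⟨I, hI⟩ := Q.exists_isBasis' X
  rw [rk_eq_ncard_of_basis' hfin hI]
  by_contra hlt
  push_neg at hlt
  have hJfin : J.Finite := hfin.subset hJ.indep.subset_ground
  have hIfin : I.Finite := hfin.subset hI.indep.subset_ground
  have henc : J.encard < I.encard := by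
    rw [← hJfin.cast_ncard_eq, ← hIfin.cast_ncard_eq]
    exact_mod_cast hlt
  obtain ⟨x, hx, hxi⟩ := hJ.indep.augment hI.indep henc
  have hxcl : x ∈ Q.closure J := by
    rw [hclJ]
    exact hXY (hI.subset hx.1)
  rw [hJ.indep.mem_closure_iff] at hxcl
  rcases hxcl with hdep | hmem
  · exact hdep.not_indep hxi
  · exact hx.2 hmem

lemma subset_closure_of_rk_le (hfin : Q.E.Finite) (hXY : X ⊆ Y) (hY : Y ⊆ Q.E)
    (hr : rk Q Y ≤ rk Q X) : Y ⊆ Q.closure X := by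
  obtain ⟨I, hI⟩ := Q.exists_isBasis' X
  obtain ⟨J, hJ, hIJ⟩ := hI.indep.subset_isBasis'_of_subset (hI.subset.trans hXY)
  have hJfin : J.Finite := hfin.subset hJ.indep.subset_ground
  have hcard : J.ncard ≤ I.ncard := by
    rw [← rk_eq_ncard_of_basis' hfin hI, ← rk_eq_ncard_of_basis' hfin hJ]
    exact hr
  have hJI : I = J := Set.eq_of_subset_of_ncard_le hIJ hcard hJfin
  have hYcl : Y ⊆ Q.closure J := ((hJ.isBasis hY).subset_closure)
  rw [← hJI] at hYcl
  exact hYcl.trans (Q.closure_subset_closure hI.subset)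

lemma mem_closure_of_rk_insert_le (hfin : Q.E.Finite) (hX : X ⊆ Q.E) (he : e ∈ Q.E)
    (hr : rk Q (insert e X) ≤ rk Q X) : e ∈ Q.closure X :=
  subset_closure_of_rk_le hfin (subset_insert e X) (insert_subset he hX) hr (mem_insert e X)

lemma rk_eq_of_subset_closure (hfin : Q.E.Finite) (hXY : X ⊆ Y) (hY : Y ⊆ Q.closure X) :
    rk Q Y = rk Q X :=
  le_antisymm (rk_le_of_subset_closure hfin hY) (rk_mono hfin hXY)

lemma rk_insert_insert_eq (hfin : Q.E.Finite) (hA : A ⊆ Q.E) (hc : c ∈ Q.E) (hc' : c' ∈ Q.E)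
    (h1 : rk Q (insert c A) = rk Q A) (h2 : rk Q (insert c' A) = rk Q A) :
    rk Q (insert c' (insert c A)) = rk Q A := by
  have hccl : c ∈ Q.closure A := mem_closure_of_rk_insert_le hfin hA hc h1.le
  have hc'cl : c' ∈ Q.closure A := mem_closure_of_rk_insert_le hfin hA hc' h2.le
  exact rk_eq_of_subset_closure hfin ((subset_insert _ _).trans (subset_insert _ _))
    (insert_subset hc'cl (insert_subset hccl (Q.subset_closure A hA)))

lemma exists_circuit_subset_of_dep (hD : Q.Dep D) (hfinD : D.Finite) :
    ∃ C, Circuit Q C ∧ C ⊆ D := by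
  obtain ⟨n, hn⟩ : ∃ n, D.ncard = n := ⟨_, rfl⟩
  induction n using Nat.strong_induction_on generalizing D with
  | _ n IH =>
    by_cases hmin : ∀ D', D' ⊂ D → Q.Indep D'
    · exact ⟨D, ⟨hD, hmin⟩, subset_rfl⟩
    · push_neg at hmin
      obtain ⟨D', hss, hdep⟩ := hmin
      have hD' : Q.Dep D' := ⟨hdep, hss.subset.trans hD.subset_ground⟩
      obtain ⟨C, hC, hCD⟩ := IH D'.ncard (hn ▸ Set.ncard_lt_ncard hss hfinD) hD'
        (hfinD.subset hss.subset) rfl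
      exact ⟨C, hC, hCD.trans hss.subset⟩

lemma Circuit.subset_ground' (hC : Circuit Q A) : A ⊆ Q.E := hC.1.subset_ground

lemma Circuit.diff_singleton_indep (hC : Circuit Q A) (he : e ∈ A) :
    Q.Indep (A \ {e}) :=
  hC.2 _ (Set.sdiff_singleton_ssubset.2 he)

lemma Circuit.mem_closure_diff_singleton (hC : Circuit Q A) (he : e ∈ A) :
    e ∈ Q.closure (A \ {e}) := by
  have hI := hC.diff_singleton_indep he
  rw [hI.mem_closure_iff]
  left
  rw [Set.insert_diff_singleton, insert_eq_of_mem he]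
  exact hC.1

end RkBasics

section RkDual

variable {γ : Type} {Q : Matroid γ} {I J X Z F R : Set γ}

private lemma ncard_inter_add_diff (s t : Set γ) (hs : s.Finite) :
    (s ∩ t).ncard + (s \ t).ncard = s.ncard := by
  rw [← Set.ncard_union_eq (Set.disjoint_left.2 fun a ha hd => hd.2 ha.2)
    (hs.subset inter_subset_left) (hs.subset diff_subset), Set.inter_union_diff]

lemma rk_restrict (hXR : X ⊆ R) : rk (Q ↾ R) X = rk Q X := by
  unfold rk
  congr 1
  ext n
  simp only [mem_setOf_eq, restrict_indep_iff]
  constructor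
  · rintro ⟨I, ⟨hI, _⟩, hIX, rfl⟩
    exact ⟨I, hI, hIX, rfl⟩
  · rintro ⟨I, hI, hIX, rfl⟩
    exact ⟨I, ⟨hI, hIX.trans hXR⟩, hIX, rfl⟩

lemma rk_dual (hfin : Q.E.Finite) (hX : X ⊆ Q.E) :
    rk Q✶ X + rk Q Q.E = X.ncard + rk Q (Q.E \ X) := by
  obtain ⟨J, hJ⟩ := Q.exists_isBasis (Q.E \ X) diff_subset
  obtain ⟨B, hB, hJB⟩ := hJ.indep.subset_isBasis_of_subset hJ.indep.subset_ground
  rw [isBasis_ground_iff] at hB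
  have hXfin : X.Finite := hfin.subset hX
  have hBE : B ⊆ Q.E := hB.subset_ground
  have hBfin : B.Finite := hfin.subset hBE
  have hJeq : B ∩ (Q.E \ X) = J :=
    (hJ.eq_of_subset_indep (hB.indep.inter_right _) (subset_inter hJB hJ.subset)
      inter_subset_right).symm
  have hBdiff : B \ X = J := by
    rw [← hJeq]
    ext x
    simp only [mem_diff, mem_inter_iff]
    exact ⟨fun ⟨h1, h2⟩ => ⟨h1, hBE h1, h2⟩, fun ⟨h1, h2, h3⟩ => ⟨h1, h3⟩⟩
  have hrkE : rk Q Q.E = B.ncard := rk_eq_ncard_of_basis' hfin (hB.isBasis_ground.isBasis')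
  have hrkJ : rk Q (Q.E \ X) = J.ncard := rk_eq_ncard_of_basis' hfin hJ.isBasis'
  have hrkdual : rk Q✶ X = (X \ B).ncard := by
    apply rk_eq_of_isGreatest
    constructor
    · refine ⟨X \ B, ?_, diff_subset, rfl⟩
      rw [dual_indep_iff_exists']
      exact ⟨diff_subset.trans hX, B, hB, disjoint_sdiff_left⟩
    · rintro n ⟨I', hI', hI'X, rfl⟩
      rw [dual_indep_iff_exists'] at hI'
      obtain ⟨hI'E, B'', hB'', hdis⟩ := hI'
      have hB''E : B'' ⊆ Q.E := hB''.subset_ground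
      have hB''fin : B''.Finite := hfin.subset hB''E
      have hI'sub : I' ⊆ X \ B'' := subset_diff.2 ⟨hI'X, hdis⟩
      have c2 : I'.ncard ≤ (X \ B'').ncard := Set.ncard_le_ncard hI'sub (hXfin.diff)
      have c1 : (X ∩ B'').ncard + (X \ B'').ncard = X.ncard := ncard_inter_add_diff _ _ hXfin
      have c5 : (B'' ∩ X).ncard + (B'' \ X).ncard = B''.ncard := ncard_inter_add_diff _ _ hB''fin
      have c6 : (B'' \ X).ncard ≤ J.ncard := by
        refine indep_ncard_le_of_basis' hfin hJ.isBasis' (hB''.indep.subset diff_subset) ?_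
        exact fun x ⟨h1, h2⟩ => ⟨hB''E h1, h2⟩
      have c7 : B''.ncard = B.ncard := hB''.ncard_eq_ncard_of_isBase hB
      have c4 : (X ∩ B).ncard + (X \ B).ncard = X.ncard := ncard_inter_add_diff _ _ hXfin
      have c8 : (B ∩ X).ncard + J.ncard = B.ncard := by
        rw [← hBdiff]; exact ncard_inter_add_diff _ _ hBfin
      have c9 : (X ∩ B).ncard = (B ∩ X).ncard := by rw [inter_comm]
      have c10 : (X ∩ B'').ncard = (B'' ∩ X).ncard := by rw [inter_comm]
      omega
  have c4 : (X ∩ B).ncard + (X \ B).ncard = X.ncard := ncard_inter_add_diff _ _ hXfin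
  have c8 : (B ∩ X).ncard + J.ncard = B.ncard := by
    rw [← hBdiff]; exact ncard_inter_add_diff _ _ hBfin
  have c9 : (X ∩ B).ncard = (B ∩ X).ncard := by rw [inter_comm]
  rw [hrkdual, hrkE, hrkJ]
  omega

lemma rk_contract (hfin : Q.E.Finite) (hF : F ⊆ Q.E) (hZ : Z ⊆ Q.E \ F) :
    rk (contract Q F) Z + rk Q F = rk Q (Z ∪ F) := by
  have hZE : Z ⊆ Q.E := hZ.trans diff_subset
  set P : Matroid γ := Q✶ ↾ (Q.E \ F) with hP
  have hPE : P.E = Q.E \ F := rfl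
  have hPfin : P.E.Finite := by rw [hPE]; exact hfin.diff (t := F)
  have hcontract : contract Q F = P✶ := rfl
  have e1 : rk P✶ Z + rk P P.E = Z.ncard + rk P (P.E \ Z) := rk_dual hPfin (by rwa [hPE])
  rw [hPE] at e1
  have r1 : rk P P.E = rk Q✶ (Q.E \ F) := by rw [hPE, hP, rk_restrict subset_rfl]
  have r2 : rk P ((Q.E \ F) \ Z) = rk Q✶ ((Q.E \ F) \ Z) := by
    rw [hP, rk_restrict diff_subset]
  rw [hPE] at r1
  have e2 : rk Q✶ (Q.E \ F) + rk Q Q.E = (Q.E \ F).ncard + rk Q (Q.E \ (Q.E \ F)) :=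
    rk_dual hfin diff_subset
  rw [Set.diff_diff_cancel_left hF] at e2
  have e3 : rk Q✶ ((Q.E \ F) \ Z) + rk Q Q.E
      = ((Q.E \ F) \ Z).ncard + rk Q (Q.E \ ((Q.E \ F) \ Z)) :=
    rk_dual hfin (diff_subset.trans diff_subset)
  have hset : Q.E \ ((Q.E \ F) \ Z) = Z ∪ F := by
    ext x
    simp only [mem_diff, mem_union]
    constructor
    · rintro ⟨hxE, hc⟩
      by_cases hxF : x ∈ F
      · exact Or.inr hxF
      · by_cases hxZ : x ∈ Z
        · exact Or.inl hxZ
        · exact absurd ⟨⟨hxE, hxF⟩, hxZ⟩ hc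
    · rintro (hxZ | hxF)
      · exact ⟨hZE hxZ, fun hmem => absurd hxZ hmem.2⟩
      · exact ⟨hF hxF, fun hmem => absurd hxF hmem.1.2⟩
  rw [hset] at e3
  have hcard : Z.ncard + ((Q.E \ F) \ Z).ncard = (Q.E \ F).ncard := by
    have := Set.ncard_diff_add_ncard_of_subset hZ (hfin.diff (t := F))
    omega
  rw [hcontract]
  omega

lemma indep_iff_rk_eq (hfin : Q.E.Finite) :
    Q.Indep I ↔ I ⊆ Q.E ∧ rk Q I = I.ncard := by
  constructor
  · intro hI
    exact ⟨hI.subset_ground, rk_indep hfin hI⟩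
  · rintro ⟨hIE, hrk⟩
    obtain ⟨J, hJ⟩ := Q.exists_isBasis' I
    have hJcard : rk Q I = J.ncard := rk_eq_ncard_of_basis' hfin hJ
    have hJI : J = I :=
      Set.eq_of_subset_of_ncard_le hJ.subset (by omega) (hfin.subset hIE)
    exact hJI ▸ hJ.indep

lemma eq_of_rk_eq {P Q : Matroid γ} (hE : P.E = Q.E) (hfin : P.E.Finite)
    (hr : ∀ Z, Z ⊆ P.E → rk P Z = rk Q Z) : P = Q := by
  refine Matroid.ext_indep hE fun ⦃I⦄ hI => ?_
  rw [indep_iff_rk_eq hfin, indep_iff_rk_eq (hE ▸ hfin), hE, hr I hI]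

lemma rk_map {δ : Type} (P : Matroid γ) (f : γ → δ) (hf : InjOn f P.E) (hX : X ⊆ P.E) :
    rk (P.map f hf) (f '' X) = rk P X := by
  unfold rk
  congr 1
  ext n
  simp only [mem_setOf_eq, map_indep_iff]
  constructor
  · rintro ⟨J, ⟨I, hI, rfl⟩, hsub, rfl⟩
    refine ⟨I, hI, ?_, (Set.ncard_image_of_injOn (hf.mono hI.subset_ground)).symm⟩
    intro x hx
    obtain ⟨y, hy, hxy⟩ := hsub ⟨x, hx, rfl⟩
    rwa [hf (hX hy) (hI.subset_ground hx) hxy] at hy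
  · rintro ⟨I, hI, hIX, rfl⟩
    exact ⟨f '' I, ⟨I, hI, rfl⟩, image_mono hIX,
      Set.ncard_image_of_injOn (hf.mono hI.subset_ground)⟩

end RkDual

section RankMatroid

variable {γ : Type} {E : Set γ} {r : Set γ → ℕ} {I J X S : Set γ} {x y : γ}

private lemma r_le_ncard (hE : E.Finite) (hins : ∀ ⦃X x⦄, X ⊆ E → x ∈ E → r (insert x X) ≤ r X + 1)
    (h0 : r ∅ = 0) (hI : I ⊆ E) : r I ≤ I.ncard := by
  have hIfin : I.Finite := hE.subset hI
  refine Set.Finite.induction_on (motive := fun s _ => s ⊆ E → r s ≤ s.ncard) _ hIfin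
    (fun _ => by rw [h0, Set.ncard_empty]) ?_ hI
  intro a s has hsfin IH hsub
  have haE : a ∈ E := hsub (mem_insert a s)
  have hsE : s ⊆ E := (subset_insert a s).trans hsub
  have h1 := hins hsE haE
  have h2 := IH hsE
  rw [Set.ncard_insert_of_notMem has hsfin]
  omega

private lemma r_le_add_diff (hE : E.Finite)
    (hins : ∀ ⦃X x⦄, X ⊆ E → x ∈ E → r (insert x X) ≤ r X + 1)
    (hJI : J ⊆ I) (hIE : I ⊆ E) : r I ≤ r J + (I \ J).ncard := by
  have hIfin : I.Finite := hE.subset hIE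
  obtain ⟨n, hn⟩ : ∃ n, (I \ J).ncard = n := ⟨_, rfl⟩
  induction n using Nat.strong_induction_on generalizing I with
  | _ n IH =>
    rcases eq_or_ne n 0 with rfl | hne
    · have hempty : I \ J = ∅ := (Set.ncard_eq_zero (hIfin.diff)).1 hn
      have h2 : I ⊆ J := fun x hx => by
        by_contra hxJ
        have hmem : x ∈ I \ J := ⟨hx, hxJ⟩
        rw [hempty] at hmem
        exact hmem
      have hIJ : I = J := h2.antisymm hJI
      rw [hn, hIJ]
      simp
    · obtain ⟨a, ha⟩ : (I \ J).Nonempty :=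
        Set.nonempty_of_ncard_ne_zero (by omega)
      have haI : a ∈ I := ha.1
      have hIa : I = insert a (I \ {a}) := by
        rw [Set.insert_diff_singleton, insert_eq_of_mem haI]
      have hJIa : J ⊆ I \ {a} := subset_diff_singleton hJI (fun hc => ha.2 hc)
      have hdiffeq : (I \ {a}) \ J = (I \ J) \ {a} := by
        ext z; simp only [mem_diff]; tauto
      have hc2 : ((I \ {a}) \ J).ncard + 1 = (I \ J).ncard := by
        rw [hdiffeq]
        exact Set.ncard_diff_singleton_add_one ha (hIfin.diff)
      have hcard : ((I \ {a}) \ J).ncard = n - 1 := by omega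
      have hlt : n - 1 < n := by omega
      have hIH := IH (n - 1) hlt hJIa (diff_subset.trans hIE) (hIfin.diff) hcard
      have hstep : r I ≤ r (I \ {a}) + 1 := by
        nth_rewrite 1 [hIa]
        exact hins (diff_subset.trans hIE) (hIE haI)
      omega

private lemma r_step1 (hE : E.Finite)
    (hmono : ∀ ⦃X Y⦄, X ⊆ Y → Y ⊆ E → r X ≤ r Y)
    (hins : ∀ ⦃X x⦄, X ⊆ E → x ∈ E → r (insert x X) ≤ r X + 1)
    (hsub2 : ∀ ⦃X x y⦄, X ⊆ E → x ∈ E → y ∈ E →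
      r (insert x X) = r X → r (insert y X) = r X → r (insert y (insert x X)) = r X)
    (hX : X ⊆ E) (hxE : x ∈ E) (hx : r (insert x X) = r X)
    (hSfin : S.Finite) (hS : S ⊆ E) : r (insert x (X ∪ S)) = r (X ∪ S) := by
  refine Set.Finite.induction_on
      (motive := fun s _ => s ⊆ E → r (insert x (X ∪ s)) = r (X ∪ s)) _ hSfin
    (fun _ => by rwa [union_empty]) ?_ hS
  intro a s haS hsfin IH hsub
  · have haE : a ∈ E := hsub (mem_insert a s)
    have hsE : s ⊆ E := (subset_insert a s).trans hsub
    have hIH := IH hsE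
    have hBE : X ∪ s ⊆ E := union_subset hX hsE
    have hunion : X ∪ insert a s = insert a (X ∪ s) := union_insert
    rw [hunion]
    by_cases hcase : r (insert a (X ∪ s)) = r (X ∪ s)
    · have hres := hsub2 hBE haE hxE hcase hIH
      rw [hres, hcase]
    · have h1 : r (X ∪ s) ≤ r (insert a (X ∪ s)) :=
        hmono (subset_insert _ _) (insert_subset haE hBE)
      have h2 : r (insert a (X ∪ s)) ≤ r (X ∪ s) + 1 := hins hBE haE
      have h4 : r (insert x (insert a (X ∪ s))) ≤ r (insert x (X ∪ s)) + 1 := by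
        rw [insert_comm]
        exact hins (insert_subset hxE hBE) haE
      have h5 : r (insert a (X ∪ s)) ≤ r (insert x (insert a (X ∪ s))) :=
        hmono (subset_insert _ _) (insert_subset hxE (insert_subset haE hBE))
      rw [hIH] at h4
      omega

private lemma r_steps (hE : E.Finite)
    (hmono : ∀ ⦃X Y⦄, X ⊆ Y → Y ⊆ E → r X ≤ r Y)
    (hins : ∀ ⦃X x⦄, X ⊆ E → x ∈ E → r (insert x X) ≤ r X + 1)
    (hsub2 : ∀ ⦃X x y⦄, X ⊆ E → x ∈ E → y ∈ E →
      r (insert x X) = r X → r (insert y X) = r X → r (insert y (insert x X)) = r X)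
    (hX : X ⊆ E) (hSfin : S.Finite) (hS : S ⊆ E)
    (hall : ∀ x ∈ S, r (insert x X) = r X) : r (X ∪ S) = r X := by
  refine Set.Finite.induction_on
      (motive := fun s _ => s ⊆ E → (∀ x ∈ s, r (insert x X) = r X) → r (X ∪ s) = r X) _ hSfin
    (fun _ _ => by rw [union_empty]) ?_ hS hall
  intro a s haS hsfin IH hsub hall'
  · have haE : a ∈ E := hsub (mem_insert a s)
    have hsE : s ⊆ E := (subset_insert a s).trans hsub
    have hIH := IH hsE (fun z hz => hall' z (mem_insert_of_mem a hz))
    have : X ∪ insert a s = insert a (X ∪ s) := union_insert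
    rw [this, r_step1 hE hmono hins hsub2 hX haE (hall' a (mem_insert a s)) hsfin hsE, hIH]

/-- Build a matroid from a rank function satisfying local axioms on a finite ground set. -/
noncomputable def rMat (E : Set γ) (hE : E.Finite) (r : Set γ → ℕ)
    (hmono : ∀ ⦃X Y⦄, X ⊆ Y → Y ⊆ E → r X ≤ r Y)
    (hins : ∀ ⦃X x⦄, X ⊆ E → x ∈ E → r (insert x X) ≤ r X + 1)
    (h0 : r ∅ = 0)
    (hsub2 : ∀ ⦃X x y⦄, X ⊆ E → x ∈ E → y ∈ E →
      r (insert x X) = r X → r (insert y X) = r X →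
      r (insert y (insert x X)) = r X) : Matroid γ :=
  (IndepMatroid.ofFinite hE (fun I => I ⊆ E ∧ I.ncard ≤ r I)
    (indep_empty := ⟨empty_subset E, by rw [h0, Set.ncard_empty]⟩)
    (indep_subset := by
      rintro I J ⟨hJE, hJr⟩ hIJ
      have hIE : I ⊆ E := hIJ.trans hJE
      refine ⟨hIE, ?_⟩
      have h1 : r J ≤ r I + (J \ I).ncard := r_le_add_diff hE hins hIJ hJE
      have h2 : (J \ I).ncard + I.ncard = J.ncard :=
        Set.ncard_diff_add_ncard_of_subset hIJ (hE.subset hJE)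
      omega)
    (indep_aug := by
      rintro I J ⟨hIE, hIr⟩ ⟨hJE, hJr⟩ hlt
      by_contra hcon
      push_neg at hcon
      have hIfin : I.Finite := hE.subset hIE
      have hrle : r I ≤ I.ncard := r_le_ncard hE hins h0 hIE
      have hrI : r I = I.ncard := le_antisymm hrle hIr
      have hall : ∀ x ∈ J \ I, r (insert x I) = r I := by
        rintro x ⟨hxJ, hxI⟩
        have hxE : x ∈ E := hJE hxJ
        have hni := hcon x hxJ hxI
        have hnr : ¬ (insert x I).ncard ≤ r (insert x I) := fun hc => by
          have := hni (insert_subset hxE hIE); omega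
        rw [Set.ncard_insert_of_notMem hxI hIfin] at hnr
        have hge : r I ≤ r (insert x I) := hmono (subset_insert _ _) (insert_subset hxE hIE)
        omega
      have hun := r_steps hE hmono hins hsub2 hIE ((hE.subset hJE).diff)
        (diff_subset.trans hJE) hall
      rw [union_diff_self] at hun
      have hJle : r J ≤ r (I ∪ J) := hmono subset_union_right (union_subset hIE hJE)
      omega)
    (subset_ground := fun I hI => hI.1)).matroid

@[simp] lemma rMat_E (E : Set γ) (hE : E.Finite) (r : Set γ → ℕ) hmono hins h0 hsub2 :
    (rMat E hE r hmono hins h0 hsub2).E = E := rfl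

@[simp] lemma rMat_indep (E : Set γ) (hE : E.Finite) (r : Set γ → ℕ) hmono hins h0 hsub2 :
    (rMat E hE r hmono hins h0 hsub2).Indep I ↔ I ⊆ E ∧ I.ncard ≤ r I := by
  simp [rMat]

lemma rMat_rk (E : Set γ) (hE : E.Finite) (r : Set γ → ℕ) hmono hins h0 hsub2
    (hX : X ⊆ E) : rk (rMat E hE r hmono hins h0 hsub2) X = r X := by
  set Q := rMat E hE r hmono hins h0 hsub2 with hQ
  have hQE : Q.E = E := rfl
  have hfin : Q.E.Finite := by rwa [hQE]
  obtain ⟨I, hI⟩ := Q.exists_isBasis' X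
  rw [rk_eq_ncard_of_basis' hfin hI]
  obtain ⟨hIE, hIcard⟩ := (rMat_indep E hE r hmono hins h0 hsub2).1 hI.indep
  have hrI : r I = I.ncard := le_antisymm (r_le_ncard hE hins h0 hIE) hIcard
  have hall : ∀ x ∈ X \ I, r (insert x I) = r I := by
    rintro x ⟨hxX, hxI⟩
    have hxE : x ∈ E := hX hxX
    have hni := hI.insert_not_indep ⟨hxX, hxI⟩
    rw [rMat_indep] at hni
    have hnr : ¬ (insert x I).ncard ≤ r (insert x I) := fun hc =>
      hni ⟨insert_subset hxE hIE, hc⟩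
    rw [Set.ncard_insert_of_notMem hxI (hE.subset hIE)] at hnr
    have hge : r I ≤ r (insert x I) := hmono (subset_insert _ _) (insert_subset hxE hIE)
    omega
  have hun := r_steps hE hmono hins hsub2 hIE ((hE.subset hX).diff)
    (diff_subset.trans hX) hall
  rw [union_diff_cancel hI.subset] at hun
  omega

end RankMatroid

section LiftLemmas

variable {α : Type} {M : Matroid α} {N : Matroid (Set α)} {X : Set α} {e g : α}

lemma exists_circuit_of_mem_closure (hM : M.E.Finite) (hX : X ⊆ M.E)
    (hecl : e ∈ M.closure X) (heX : e ∉ X) :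
    ∃ C0, Circuit M C0 ∧ e ∈ C0 ∧ C0 ⊆ insert e X := by
  obtain ⟨I, hI⟩ := M.exists_isBasis X hX
  have hclI : M.closure I = M.closure X := hI.closure_eq_closure
  have heI : e ∉ I := fun hc => heX (hI.subset hc)
  have hdep : M.Dep (insert e I) := by
    rw [← hclI] at hecl
    rcases hI.indep.mem_closure_iff.mp hecl with hd | hmem
    · exact hd
    · exact absurd hmem heI
  obtain ⟨C0, hC0, hC0sub⟩ := exists_circuit_subset_of_dep hdep
    ((hM.subset hI.indep.subset_ground).insert e)
  have heC0 : e ∈ C0 := by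
    by_contra hc
    have : C0 ⊆ I := fun z hz => ((hC0sub hz).resolve_left (fun h => hc (h ▸ hz)))
    exact hC0.1.not_indep (hI.indep.subset this)
  exact ⟨C0, hC0, heC0, hC0sub.trans (insert_subset_insert hI.subset)⟩

/-- The key lemma: using the perfect-collection hypothesis, any circuit `C` through `e`
lies in the `N`-closure of `C0` together with the circuits avoiding `e` in `C ∪ C0`. -/
lemma lemmaB (hM : M.E.Finite)
    (hNE : N.E = {C | Circuit M C})
    (h : ∀ Cs, Perfect M Cs → ∀ C, Circuit M C → C ⊆ ⋃₀ Cs → C ∈ N.closure Cs)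
    {C C0 : Set α} (hC : Circuit M C) (hC0 : Circuit M C0)
    (heC : e ∈ C) (heC0 : e ∈ C0) :
    C ∈ N.closure (insert C0 {D | Circuit M D ∧ D ⊆ (C ∪ C0) \ {e}}) := by
  classical
  set Y := C ∪ C0 with hY
  have hYE : Y ⊆ M.E := union_subset hC.subset_ground' hC0.subset_ground'
  have hYfin : Y.Finite := hM.subset hYE
  have hC0e : M.Indep (C0 \ {e}) := hC0.diff_singleton_indep heC0
  obtain ⟨B, hB, hC0B⟩ := hC0e.subset_isBasis_of_subset
    (diff_subset.trans subset_union_right) hYE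
  have hBY : B ⊆ Y := hB.subset
  have hBfin : B.Finite := hYfin.subset hBY
  have heB : e ∉ B := by
    intro heB
    have hC0sub : C0 ⊆ B := by
      intro z hz
      rcases eq_or_ne z e with rfl | hne
      · exact heB
      · exact hC0B ⟨hz, hne⟩
    exact hC0.1.not_indep (hB.indep.subset hC0sub)
  have hDexists : ∀ y ∈ Y \ B, ∃ D, Circuit M D ∧ y ∈ D ∧ D ⊆ insert y B := by
    intro y hy
    have hdep : M.Dep (insert y B) := hB.insert_dep hy
    obtain ⟨D, hD, hDsub⟩ := exists_circuit_subset_of_dep hdep (hBfin.insert y)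
    refine ⟨D, hD, ?_, hDsub⟩
    by_contra hyD
    have : D ⊆ B := fun z hz => ((hDsub hz).resolve_left fun hzy => hyD (hzy ▸ hz))
    exact hD.1.not_indep (hB.indep.subset this)
  choose! D0 hD0c hD0m hD0s using hDexists
  set D : α → Set α := fun y => if y = e then C0 else D0 y with hD
  have heY : e ∈ Y \ B := ⟨Or.inl heC, heB⟩
  have hD1 : ∀ y ∈ Y \ B, Circuit M (D y) := by
    intro y hy
    by_cases hye : y = e
    · simp only [hD, if_pos hye]; exact hC0
    · simp only [hD, if_neg hye]; exact hD0c y hy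
  have hD2 : ∀ y ∈ Y \ B, y ∈ D y := by
    intro y hy
    by_cases hye : y = e
    · simp only [hD, if_pos hye]; rw [hye]; exact heC0
    · simp only [hD, if_neg hye]; exact hD0m y hy
  have hD3 : ∀ y ∈ Y \ B, D y ⊆ insert y B := by
    intro y hy
    by_cases hye : y = e
    · simp only [hD, if_pos hye]
      rw [hye]
      intro z hz
      rcases eq_or_ne z e with rfl | hne
      · exact mem_insert _ _
      · exact mem_insert_of_mem _ (hC0B ⟨hz, hne⟩)
    · simp only [hD, if_neg hye]; exact hD0s y hy
  have hDdiff : ∀ y ∈ Y \ B, D y \ {y} ⊆ B := by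
    rintro y hy z ⟨hz, hzy⟩
    exact (hD3 y hy hz).resolve_left hzy
  set Cs := D '' (Y \ B) with hCs
  have hCsfin : Cs.Finite := ((hYfin.diff (t := B)).image D)
  set U := ⋃₀ Cs with hU
  have hDU : ∀ y ∈ Y \ B, D y ⊆ U := fun y hy => subset_sUnion_of_mem ⟨y, hy, rfl⟩
  have hUY : U ⊆ Y := by
    rintro z hz
    obtain ⟨_, ⟨y, hy, rfl⟩, hzD⟩ := hz
    rcases hD3 y hy hzD with rfl | hzB
    · exact hy.1
    · exact hBY hzB
  have hUfin : U.Finite := hYfin.subset hUY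
  have hUin : ∀ z ∈ U, z ∉ B → z ∈ Y \ B ∧ z ∈ D z := by
    rintro z hz hzB
    obtain ⟨_, ⟨y, hy, rfl⟩, hzD⟩ := hz
    have hzy : z = y := (hD3 y hy hzD).resolve_right hzB
    subst hzy
    exact ⟨hy, hzD⟩
  have hUcl : U ⊆ M.closure (U ∩ B) := by
    intro z hz
    by_cases hzB : z ∈ B
    · exact M.subset_closure (U ∩ B) ((inter_subset_right).trans (hBY.trans hYE)) ⟨hz, hzB⟩
    · obtain ⟨hzY, hzD⟩ := hUin z hz hzB
      have h1 : z ∈ M.closure (D z \ {z}) :=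
        (hD1 z hzY).mem_closure_diff_singleton (hD2 z hzY)
      refine M.closure_subset_closure ?_ h1
      intro w hw
      exact ⟨hDU z hzY hw.1, hDdiff z hzY hw⟩
  have hUBindep : M.Indep (U ∩ B) := hB.indep.subset inter_subset_right
  have hrkU : rk M U = (U ∩ B).ncard := by
    refine le_antisymm ?_ (le_rk hM hUBindep inter_subset_left)
    exact (rk_le_of_subset_closure hM hUcl).trans_eq (rk_indep hM hUBindep)
  have hUB : U \ B = Y \ B := by
    apply subset_antisymm
    · rintro z ⟨hz, hzB⟩
      exact (hUin z hz hzB).1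
    · rintro y hy
      exact ⟨hDU y hy (hD2 y hy), hy.2⟩
  have hinj : InjOn D (Y \ B) := by
    intro y hy y' hy' heq
    by_contra hne
    have : y ∈ D y' := heq ▸ hD2 y hy
    rcases hD3 y' hy' this with h | h
    · exact hne h
    · exact hy.2 h
  have hCscard : Cs.ncard = (Y \ B).ncard := Set.ncard_image_of_injOn hinj
  have hcardU : U.ncard = rk M U + Cs.ncard := by
    rw [hrkU, hCscard, ← hUB]
    have h1 : (U ∩ B).ncard + (U \ B).ncard = U.ncard := by
      rw [← Set.ncard_union_eq (Set.disjoint_left.2 fun a ha hd => hd.2 ha.2)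
        (hUfin.subset inter_subset_left) (hUfin.subset diff_subset), Set.inter_union_diff]
    omega
  have hPerfect : Perfect M Cs := by
    refine ⟨hCsfin, ?_, hcardU, ?_⟩
    · rintro _ ⟨y, hy, rfl⟩
      exact hD1 y hy
    · rintro _ ⟨y, hy, rfl⟩ hsub
      have hyU : y ∈ ⋃₀ (Cs \ {D y}) := hsub (hD2 y hy)
      obtain ⟨_, ⟨⟨y', hy', rfl⟩, hne⟩, hyD⟩ := hyU
      have hyy' : y ≠ y' := fun hc => hne (by rw [hc]; exact rfl)
      rcases hD3 y' hy' hyD with h | h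
      · exact hyy' h
      · exact hy.2 h
  have hCU : C ⊆ U := by
    intro cc hcc
    by_contra hcU
    have hcB : cc ∈ B := by
      by_contra hcB
      have hcY : cc ∈ Y \ B := ⟨Or.inl hcc, hcB⟩
      exact hcU (hDU cc hcY (hD2 cc hcY))
    have hsub : C \ {cc} ⊆ M.closure (B \ {cc}) := by
      rintro z ⟨hzC, hzc⟩
      by_cases hzB : z ∈ B
      · exact M.subset_closure (B \ {cc}) (diff_subset.trans (hBY.trans hYE)) ⟨hzB, hzc⟩
      · have hzY : z ∈ Y \ B := ⟨Or.inl hzC, hzB⟩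
        have h1 : z ∈ M.closure (D z \ {z}) :=
          (hD1 z hzY).mem_closure_diff_singleton (hD2 z hzY)
        refine M.closure_subset_closure ?_ h1
        rintro w hw
        refine ⟨hDdiff z hzY hw, ?_⟩
        intro hwc
        exact hcU (hwc ▸ hDU z hzY hw.1)
    have hccl : cc ∈ M.closure (B \ {cc}) := by
      have h1 : cc ∈ M.closure (C \ {cc}) := hC.mem_closure_diff_singleton hcc
      exact Matroid.closure_subset_closure_of_subset_closure hsub h1
    have hBdind : M.Indep (B \ {cc}) := hB.indep.subset diff_subset
    have hccB : cc ∉ B \ {cc} := fun hc => hc.2 rfl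
    have : M.Indep (insert cc (B \ {cc})) := by
      rw [Set.insert_diff_singleton, insert_eq_of_mem hcB]
      exact hB.indep
    rw [hBdind.insert_indep_iff_of_notMem hccB] at this
    exact this.2 hccl
  have hfinal := h Cs hPerfect C hC hCU
  refine N.closure_subset_closure ?_ hfinal
  rintro _ ⟨y, hy, rfl⟩
  by_cases hye : y = e
  · simp only [hD, if_pos hye]
    exact mem_insert _ _
  · refine mem_insert_of_mem _ ⟨hD1 y hy, ?_⟩
    intro z hz
    have hzB : z ∈ insert y B := hD3 y hy hz
    refine ⟨?_, ?_⟩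
    · rcases hzB with rfl | hzB
      · exact hy.1
      · exact hBY hzB
    · rintro (rfl : z = e)
      rcases hzB with h | h
      · exact hye h.symm
      · exact heB h

lemma circuits_insert_eq (hX : X ⊆ M.E) (he : e ∉ M.closure X) :
    {D | Circuit M D ∧ D ⊆ insert e X} = {D | Circuit M D ∧ D ⊆ X} := by
  apply subset_antisymm
  · rintro C ⟨hC, hCX⟩
    refine ⟨hC, fun z hz => ?_⟩
    have hze : z ≠ e := by
      rintro rfl
      have h1 : z ∈ M.closure (C \ {z}) := hC.mem_closure_diff_singleton hz
      have h2 : C \ {z} ⊆ X := fun w hw => (hCX hw.1).resolve_left hw.2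
      exact he (M.closure_subset_closure h2 h1)
    exact (hCX hz).resolve_left hze
  · rintro C ⟨hC, hCX⟩
    exact ⟨hC, hCX.trans (subset_insert e X)⟩

lemma spread (hM : M.E.Finite) (hNE : N.E = {C | Circuit M C})
    (h : ∀ Cs, Perfect M Cs → ∀ C, Circuit M C → C ⊆ ⋃₀ Cs → C ∈ N.closure Cs)
    {C0 : Set α} (hC0 : Circuit M C0) (heC0 : e ∈ C0) (hC0X : C0 ⊆ insert e X) :
    {D | Circuit M D ∧ D ⊆ insert e X} ⊆
      N.closure (insert C0 {D | Circuit M D ∧ D ⊆ X}) := by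
  have hground : insert C0 {D | Circuit M D ∧ D ⊆ X} ⊆ N.E := by
    rw [hNE]
    rintro D (rfl | hD)
    · exact hC0
    · exact hD.1
  rintro C ⟨hC, hCX⟩
  by_cases heC : e ∈ C
  · have hB := lemmaB hM hNE h hC hC0 heC heC0
    refine N.closure_subset_closure (insert_subset_insert ?_) hB
    rintro D ⟨hD, hDs⟩
    refine ⟨hD, fun z hz => ?_⟩
    obtain ⟨hz1, hz2⟩ := hDs hz
    rcases hz1 with hz1 | hz1
    · exact (hCX hz1).resolve_left hz2
    · exact (hC0X hz1).resolve_left hz2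
  · refine N.subset_closure _ hground (mem_insert_of_mem _ ⟨hC, fun z hz => ?_⟩)
    exact (hCX hz).resolve_left (fun hc => heC (hc ▸ hz))

lemma keyN (hM : M.E.Finite) (hNE : N.E = {C | Circuit M C})
    (h : ∀ Cs, Perfect M Cs → ∀ C, Circuit M C → C ⊆ ⋃₀ Cs → C ∈ N.closure Cs)
    {S : Set (Set α)} (hX : X ⊆ M.E)
    (hS : S ⊆ N.E) (hecl : e ∈ M.closure X)
    (hCe : {D | Circuit M D ∧ D ⊆ insert e X} ⊆ N.closure S)
    (hCg : {D | Circuit M D ∧ D ⊆ insert g X} ⊆ N.closure S) :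
    {D | Circuit M D ∧ D ⊆ insert g (insert e X)} ⊆ N.closure S := by
  by_cases heX : e ∈ X
  · rw [insert_eq_of_mem heX]
    exact hCg
  by_cases hge : g = e
  · subst hge
    rwa [insert_idem]
  by_cases hgX : g ∈ X
  · rwa [insert_eq_of_mem (mem_insert_of_mem e hgX)]
  obtain ⟨C0, hC0, heC0, hC0X⟩ := exists_circuit_of_mem_closure hM hX hecl heX
  rintro C ⟨hC, hCsub⟩
  by_cases heC : e ∈ C
  · have hB := lemmaB hM hNE h hC hC0 heC heC0
    refine Matroid.closure_subset_closure_of_subset_closure ?_ hB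
    rintro D (rfl | ⟨hD, hDsub⟩)
    · exact hCe ⟨hC0, hC0X⟩
    · refine hCg ⟨hD, fun z hz => ?_⟩
      obtain ⟨hz1, hz2⟩ := hDsub hz
      rcases hz1 with hz1 | hz1
      · rcases hCsub hz1 with h' | h'
        · exact h' ▸ mem_insert _ _
        · rcases h' with h' | h'
          · exact absurd h' hz2
          · exact mem_insert_of_mem _ h'
      · rcases hC0X hz1 with h' | h'
        · exact absurd h' hz2
        · exact mem_insert_of_mem _ h'
  · refine hCg ⟨hC, fun z hz => ?_⟩
    rcases hCsub hz with h' | h'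
    · exact h' ▸ mem_insert _ _
    · rcases h' with h' | h'
      · exact absurd (h' ▸ hz) heC
      · exact mem_insert_of_mem _ h'

end LiftLemmas

section Assembly

variable {α : Type} {M : Matroid α} {N : Matroid (Set α)} {X R' : Set α} {e g : α}

lemma ins_aux (hM : M.E.Finite) (hNE : N.E = {C | Circuit M C})
    (h : ∀ Cs, Perfect M Cs → ∀ C, Circuit M C → C ⊆ ⋃₀ Cs → C ∈ N.closure Cs)
    (hNfin : N.E.Finite) (R : Set (Set α)) (hR : R ⊆ N.E) (hX : X ⊆ M.E) (heE : e ∈ M.E) :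
    rk M (insert e X) + rk N ({D | Circuit M D ∧ D ⊆ insert e X} ∪ R)
      ≤ rk M X + rk N ({D | Circuit M D ∧ D ⊆ X} ∪ R) + 1 := by
  have hCXE : {D | Circuit M D ∧ D ⊆ X} ⊆ N.E := fun D hD => by rw [hNE]; exact hD.1
  by_cases heX : e ∈ X
  · rw [insert_eq_of_mem heX]; omega
  by_cases hecl : e ∈ M.closure X
  · obtain ⟨C0, hC0, heC0, hC0X⟩ := exists_circuit_of_mem_closure hM hX hecl heX
    have hMle : rk M (insert e X) ≤ rk M X :=
      rk_le_of_subset_closure hM (insert_subset hecl (M.subset_closure X hX))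
    have hins2 : insert C0 ({D | Circuit M D ∧ D ⊆ X} ∪ R) ⊆ N.E :=
      insert_subset (by rw [hNE]; exact hC0) (union_subset hCXE hR)
    have hsp := spread hM hNE h hC0 heC0 hC0X
    have hNle : rk N ({D | Circuit M D ∧ D ⊆ insert e X} ∪ R)
        ≤ rk N (insert C0 ({D | Circuit M D ∧ D ⊆ X} ∪ R)) := by
      apply rk_le_of_subset_closure hNfin
      apply union_subset
      · exact hsp.trans (N.closure_subset_closure (insert_subset_insert subset_union_left))
      · exact fun D hD => N.subset_closure _ hins2 (mem_insert_of_mem _ (Or.inr hD))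
    have hNle2 : rk N (insert C0 ({D | Circuit M D ∧ D ⊆ X} ∪ R))
        ≤ rk N ({D | Circuit M D ∧ D ⊆ X} ∪ R) + 1 := rk_insert_le hNfin
    omega
  · rw [circuits_insert_eq hX hecl]
    have := rk_insert_le (Q := M) (e := e) (X := X) hM
    omega

lemma sub_aux (hM : M.E.Finite) (hNE : N.E = {C | Circuit M C})
    (h : ∀ Cs, Perfect M Cs → ∀ C, Circuit M C → C ⊆ ⋃₀ Cs → C ∈ N.closure Cs)
    (hNfin : N.E.Finite) (R : Set (Set α)) (hR : R ⊆ N.E)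
    (hX : X ⊆ M.E) (heE : e ∈ M.E) (hgE : g ∈ M.E)
    (h1 : rk M (insert e X) + rk N ({D | Circuit M D ∧ D ⊆ insert e X} ∪ R)
        = rk M X + rk N ({D | Circuit M D ∧ D ⊆ X} ∪ R))
    (h2 : rk M (insert g X) + rk N ({D | Circuit M D ∧ D ⊆ insert g X} ∪ R)
        = rk M X + rk N ({D | Circuit M D ∧ D ⊆ X} ∪ R)) :
    rk M (insert g (insert e X)) + rk N ({D | Circuit M D ∧ D ⊆ insert g (insert e X)} ∪ R)
        = rk M X + rk N ({D | Circuit M D ∧ D ⊆ X} ∪ R) := by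
  have hCXE : {D | Circuit M D ∧ D ⊆ X} ⊆ N.E := fun D hD => by rw [hNE]; exact hD.1
  have hCeE : {D | Circuit M D ∧ D ⊆ insert e X} ⊆ N.E := fun D hD => by rw [hNE]; exact hD.1
  have hCgE : {D | Circuit M D ∧ D ⊆ insert g X} ⊆ N.E := fun D hD => by rw [hNE]; exact hD.1
  have hCegE : {D | Circuit M D ∧ D ⊆ insert g (insert e X)} ⊆ N.E :=
    fun D hD => by rw [hNE]; exact hD.1
  have hAE : {D | Circuit M D ∧ D ⊆ X} ∪ R ⊆ N.E := union_subset hCXE hR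
  have hmono_e : {D | Circuit M D ∧ D ⊆ X} ∪ R ⊆ {D | Circuit M D ∧ D ⊆ insert e X} ∪ R :=
    union_subset_union_left R (fun D hD => ⟨hD.1, hD.2.trans (subset_insert e X)⟩)
  have hmono_g : {D | Circuit M D ∧ D ⊆ X} ∪ R ⊆ {D | Circuit M D ∧ D ⊆ insert g X} ∪ R :=
    union_subset_union_left R (fun D hD => ⟨hD.1, hD.2.trans (subset_insert g X)⟩)
  have hm1 : rk M X ≤ rk M (insert e X) := rk_mono hM (subset_insert _ _)
  have hn1 : rk N ({D | Circuit M D ∧ D ⊆ X} ∪ R)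
      ≤ rk N ({D | Circuit M D ∧ D ⊆ insert e X} ∪ R) := rk_mono hNfin hmono_e
  have hm2 : rk M X ≤ rk M (insert g X) := rk_mono hM (subset_insert _ _)
  have hn2 : rk N ({D | Circuit M D ∧ D ⊆ X} ∪ R)
      ≤ rk N ({D | Circuit M D ∧ D ⊆ insert g X} ∪ R) := rk_mono hNfin hmono_g
  have hMe : rk M (insert e X) = rk M X := by omega
  have hNe : rk N ({D | Circuit M D ∧ D ⊆ insert e X} ∪ R)
      = rk N ({D | Circuit M D ∧ D ⊆ X} ∪ R) := by omega
  have hMg : rk M (insert g X) = rk M X := by omega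
  have hNg : rk N ({D | Circuit M D ∧ D ⊆ insert g X} ∪ R)
      = rk N ({D | Circuit M D ∧ D ⊆ X} ∪ R) := by omega
  have hecl : e ∈ M.closure X := mem_closure_of_rk_insert_le hM hX heE hMe.le
  have hgcl : g ∈ M.closure X := mem_closure_of_rk_insert_le hM hX hgE hMg.le
  have hCe : {D | Circuit M D ∧ D ⊆ insert e X}
      ⊆ N.closure ({D | Circuit M D ∧ D ⊆ X} ∪ R) :=
    subset_union_left.trans
      (subset_closure_of_rk_le hNfin hmono_e (union_subset hCeE hR) hNe.le)
  have hCg : {D | Circuit M D ∧ D ⊆ insert g X}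
      ⊆ N.closure ({D | Circuit M D ∧ D ⊆ X} ∪ R) :=
    subset_union_left.trans
      (subset_closure_of_rk_le hNfin hmono_g (union_subset hCgE hR) hNg.le)
  have hkey := keyN hM hNE h hX hAE hecl hCe hCg
  have hMgoal : rk M (insert g (insert e X)) = rk M X :=
    le_antisymm
      (rk_le_of_subset_closure hM
        (insert_subset hgcl (insert_subset hecl (M.subset_closure X hX))))
      (rk_mono hM ((subset_insert _ _).trans (subset_insert _ _)))
  have hNgoal : rk N ({D | Circuit M D ∧ D ⊆ insert g (insert e X)} ∪ R)
      = rk N ({D | Circuit M D ∧ D ⊆ X} ∪ R) := by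
    refine le_antisymm (rk_le_of_subset_closure hNfin (union_subset hkey ?_)) (rk_mono hNfin ?_)
    · exact subset_union_right.trans (N.subset_closure _ hAE)
    · exact union_subset_union_left R
        (fun D hD => ⟨hD.1, hD.2.trans ((subset_insert _ _).trans (subset_insert _ _))⟩)
  omega

lemma mix_aux (hM : M.E.Finite) (hNE : N.E = {C | Circuit M C}) (hNfin : N.E.Finite)
    {R : Set (Set α)} {c : Set α} (hR : R ⊆ N.E) (hX : X ⊆ M.E) (hc : c ∈ N.E)
    (h1 : rk M (insert e X) + rk N ({D | Circuit M D ∧ D ⊆ insert e X} ∪ R)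
        = rk M X + rk N ({D | Circuit M D ∧ D ⊆ X} ∪ R))
    (h2 : rk N (insert c ({D | Circuit M D ∧ D ⊆ X} ∪ R))
        = rk N ({D | Circuit M D ∧ D ⊆ X} ∪ R)) :
    rk M (insert e X) + rk N ({D | Circuit M D ∧ D ⊆ insert e X} ∪ insert c R)
        = rk M X + rk N ({D | Circuit M D ∧ D ⊆ X} ∪ R) := by
  have hCXE : {D | Circuit M D ∧ D ⊆ X} ⊆ N.E := fun D hD => by rw [hNE]; exact hD.1
  have hCeE : {D | Circuit M D ∧ D ⊆ insert e X} ⊆ N.E := fun D hD => by rw [hNE]; exact hD.1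
  have hAE : {D | Circuit M D ∧ D ⊆ X} ∪ R ⊆ N.E := union_subset hCXE hR
  have hmono_e : {D | Circuit M D ∧ D ⊆ X} ∪ R ⊆ {D | Circuit M D ∧ D ⊆ insert e X} ∪ R :=
    union_subset_union_left R (fun D hD => ⟨hD.1, hD.2.trans (subset_insert e X)⟩)
  have hm1 : rk M X ≤ rk M (insert e X) := rk_mono hM (subset_insert _ _)
  have hn1 : rk N ({D | Circuit M D ∧ D ⊆ X} ∪ R)
      ≤ rk N ({D | Circuit M D ∧ D ⊆ insert e X} ∪ R) := rk_mono hNfin hmono_e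
  have hMe : rk M (insert e X) = rk M X := by omega
  have hNe : rk N ({D | Circuit M D ∧ D ⊆ insert e X} ∪ R)
      = rk N ({D | Circuit M D ∧ D ⊆ X} ∪ R) := by omega
  have hclA : {D | Circuit M D ∧ D ⊆ insert e X} ∪ R
      ⊆ N.closure ({D | Circuit M D ∧ D ⊆ X} ∪ R) :=
    subset_closure_of_rk_le hNfin hmono_e (union_subset hCeE hR) hNe.le
  have hccl : c ∈ N.closure ({D | Circuit M D ∧ D ⊆ X} ∪ R) :=
    mem_closure_of_rk_insert_le hNfin hAE hc h2.le
  have hNgoal : rk N ({D | Circuit M D ∧ D ⊆ insert e X} ∪ insert c R)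
      = rk N ({D | Circuit M D ∧ D ⊆ X} ∪ R) := by
    refine le_antisymm (rk_le_of_subset_closure hNfin ?_)
      (rk_mono hNfin (union_subset_union
        (fun D hD => ⟨hD.1, hD.2.trans (subset_insert e X)⟩) (subset_insert c R)))
    rw [union_insert]
    exact insert_subset hccl hclA
  omega

lemma preimage_inl_insert_inl {δ : Type} (e : α) (Z : Set (α ⊕ δ)) :
    Sum.inl ⁻¹' (insert (Sum.inl e) Z) = insert e (Sum.inl ⁻¹' Z) := by
  ext x; simp

lemma preimage_inr_insert_inl {δ : Type} (e : α) (Z : Set (α ⊕ δ)) :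
    Sum.inr ⁻¹' (insert (Sum.inl e) Z) = Sum.inr ⁻¹' Z := by
  ext x; simp

lemma preimage_inl_insert_inr {δ : Type} (c : δ) (Z : Set (α ⊕ δ)) :
    Sum.inl ⁻¹' (insert (Sum.inr c) Z) = Sum.inl ⁻¹' Z := by
  ext x; simp

lemma preimage_inr_insert_inr {δ : Type} (c : δ) (Z : Set (α ⊕ δ)) :
    Sum.inr ⁻¹' (insert (Sum.inr c) Z) = insert c (Sum.inr ⁻¹' Z) := by
  ext x; simp

end Assembly


/-- The original lift construction: if `N`, a matroid on the circuits of `M`, satisfies the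
perfect-collection condition, then `X ↦ r_M(X) + r_N({circuits of M contained in X})` is
the rank function of a matroid `L` on `E`, and `L` is a rank-`r(N)` lift of `M`. -/
theorem stmt6 {α : Type} (M : Matroid α) (hM : M.E.Finite) (N : Matroid (Set α))
    (hNE : N.E = {C | Circuit M C})
    (h : ∀ Cs, Perfect M Cs → ∀ C, Circuit M C → C ⊆ ⋃₀ Cs → C ∈ N.closure Cs) :
    ∃ L : Matroid α, L.E = M.E ∧
      (∀ X ⊆ M.E, rk L X = rk M X + rk N {C | Circuit M C ∧ C ⊆ X}) ∧
      IsLiftOf L M ∧ rank L = rank M + rank N := by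
  classical
  have hNfin : N.E.Finite := by
    refine hM.finite_subsets.subset ?_
    rw [hNE]
    exact fun C hC => hC.1.subset_ground
  have hCXE : ∀ X : Set α, {D | Circuit M D ∧ D ⊆ X} ⊆ N.E :=
    fun X D hD => by rw [hNE]; exact hD.1
  have hCmono : ∀ {X Y : Set α}, X ⊆ Y →
      {D | Circuit M D ∧ D ⊆ X} ⊆ {D | Circuit M D ∧ D ⊆ Y} :=
    fun hXY D hD => ⟨hD.1, hD.2.trans hXY⟩
  have hCempty : {D | Circuit M D ∧ D ⊆ (∅ : Set α)} = ∅ := by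
    ext D
    simp only [mem_setOf_eq, subset_empty_iff, mem_empty_iff_false, iff_false, not_and]
    rintro hD rfl
    exact hD.1.not_indep M.empty_indep
  -- the lift matroid L
  have hLmono : ∀ ⦃X Y : Set α⦄, X ⊆ Y → Y ⊆ M.E →
      rk M X + rk N {D | Circuit M D ∧ D ⊆ X} ≤ rk M Y + rk N {D | Circuit M D ∧ D ⊆ Y} :=
    fun X Y hXY _ => Nat.add_le_add (rk_mono hM hXY) (rk_mono hNfin (hCmono hXY))
  have hLins : ∀ ⦃X : Set α⦄ ⦃x : α⦄, X ⊆ M.E → x ∈ M.E →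
      rk M (insert x X) + rk N {D | Circuit M D ∧ D ⊆ insert x X}
        ≤ rk M X + rk N {D | Circuit M D ∧ D ⊆ X} + 1 := by
    intro X x hX hx
    have := ins_aux hM hNE h hNfin ∅ (empty_subset _) hX hx
    simpa only [union_empty] using this
  have hL0 : rk M ∅ + rk N {D | Circuit M D ∧ D ⊆ (∅ : Set α)} = 0 := by
    rw [hCempty, rk_empty hM, rk_empty hNfin]
  have hLsub : ∀ ⦃X : Set α⦄ ⦃x y : α⦄, X ⊆ M.E → x ∈ M.E → y ∈ M.E →
      rk M (insert x X) + rk N {D | Circuit M D ∧ D ⊆ insert x X}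
        = rk M X + rk N {D | Circuit M D ∧ D ⊆ X} →
      rk M (insert y X) + rk N {D | Circuit M D ∧ D ⊆ insert y X}
        = rk M X + rk N {D | Circuit M D ∧ D ⊆ X} →
      rk M (insert y (insert x X)) + rk N {D | Circuit M D ∧ D ⊆ insert y (insert x X)}
        = rk M X + rk N {D | Circuit M D ∧ D ⊆ X} := by
    intro X x y hX hx hy hxe hye
    have := sub_aux hM hNE h hNfin ∅ (empty_subset _) hX hx hy
      (by simpa only [union_empty] using hxe) (by simpa only [union_empty] using hye)
    simpa only [union_empty] using this
  set L : Matroid α := rMat M.E hM (fun X => rk M X + rk N {D | Circuit M D ∧ D ⊆ X})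
    hLmono hLins hL0 hLsub with hLdef
  have hLE : L.E = M.E := by rw [hLdef]; rfl
  have hLrk : ∀ X ⊆ M.E, rk L X = rk M X + rk N {C | Circuit M C ∧ C ⊆ X} := by
    intro X hX
    rw [hLdef]
    exact rMat_rk _ _ _ _ _ _ _ hX
  -- the major K
  obtain ⟨B₀, hB₀⟩ := N.exists_isBase
  have hB₀E : B₀ ⊆ N.E := hB₀.subset_ground
  set F₀ : Set (α ⊕ Set α) := Sum.inr '' B₀ with hF₀def
  set EK : Set (α ⊕ Set α) := (Sum.inl '' M.E) ∪ F₀ with hEKdef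
  have hEKfin : EK.Finite := (hM.image _).union ((hNfin.subset hB₀E).image _)
  have hinlEK : ∀ {x : α}, Sum.inl x ∈ EK ↔ x ∈ M.E := by
    intro x
    simp [hEKdef, hF₀def]
  have hinrEK : ∀ {c : Set α}, Sum.inr c ∈ EK ↔ c ∈ B₀ := by
    intro c
    simp [hEKdef, hF₀def]
  have hpre_l : ∀ {Z : Set (α ⊕ Set α)}, Z ⊆ EK → Sum.inl ⁻¹' Z ⊆ M.E :=
    fun {Z} hZ x hx => hinlEK.1 (hZ hx)
  have hpre_r : ∀ {Z : Set (α ⊕ Set α)}, Z ⊆ EK → Sum.inr ⁻¹' Z ⊆ B₀ :=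
    fun {Z} hZ c hc => hinrEK.1 (hZ hc)
  have hKmono : ∀ ⦃Z W : Set (α ⊕ Set α)⦄, Z ⊆ W → W ⊆ EK →
      rk M (Sum.inl ⁻¹' Z) + rk N ({D | Circuit M D ∧ D ⊆ Sum.inl ⁻¹' Z} ∪ Sum.inr ⁻¹' Z)
      ≤ rk M (Sum.inl ⁻¹' W) + rk N ({D | Circuit M D ∧ D ⊆ Sum.inl ⁻¹' W} ∪ Sum.inr ⁻¹' W) :=
    fun Z W hZW _ => Nat.add_le_add (rk_mono hM (preimage_mono hZW))
      (rk_mono hNfin (union_subset_union (hCmono (preimage_mono hZW)) (preimage_mono hZW)))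
  have hKins : ∀ ⦃Z : Set (α ⊕ Set α)⦄ ⦃z : α ⊕ Set α⦄, Z ⊆ EK → z ∈ EK →
      rk M (Sum.inl ⁻¹' insert z Z)
        + rk N ({D | Circuit M D ∧ D ⊆ Sum.inl ⁻¹' insert z Z} ∪ Sum.inr ⁻¹' insert z Z)
      ≤ rk M (Sum.inl ⁻¹' Z)
        + rk N ({D | Circuit M D ∧ D ⊆ Sum.inl ⁻¹' Z} ∪ Sum.inr ⁻¹' Z) + 1 := by
    rintro Z (e | c) hZ hz
    · rw [preimage_inl_insert_inl, preimage_inr_insert_inl]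
      exact ins_aux hM hNE h hNfin _ ((hpre_r hZ).trans hB₀E) (hpre_l hZ) (hinlEK.1 hz)
    · rw [preimage_inl_insert_inr, preimage_inr_insert_inr, union_insert]
      have := rk_insert_le (Q := N) (e := c)
        (X := {D | Circuit M D ∧ D ⊆ Sum.inl ⁻¹' Z} ∪ Sum.inr ⁻¹' Z) hNfin
      omega
  have hK0 : rk M (Sum.inl ⁻¹' (∅ : Set (α ⊕ Set α)))
      + rk N ({D | Circuit M D ∧ D ⊆ Sum.inl ⁻¹' (∅ : Set (α ⊕ Set α))}
        ∪ Sum.inr ⁻¹' (∅ : Set (α ⊕ Set α))) = 0 := by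
    rw [preimage_empty, preimage_empty, hCempty, empty_union, rk_empty hM, rk_empty hNfin]
  have hKsub : ∀ ⦃Z : Set (α ⊕ Set α)⦄ ⦃z w : α ⊕ Set α⦄, Z ⊆ EK → z ∈ EK → w ∈ EK →
      rk M (Sum.inl ⁻¹' insert z Z)
        + rk N ({D | Circuit M D ∧ D ⊆ Sum.inl ⁻¹' insert z Z} ∪ Sum.inr ⁻¹' insert z Z)
        = rk M (Sum.inl ⁻¹' Z) + rk N ({D | Circuit M D ∧ D ⊆ Sum.inl ⁻¹' Z} ∪ Sum.inr ⁻¹' Z) →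
      rk M (Sum.inl ⁻¹' insert w Z)
        + rk N ({D | Circuit M D ∧ D ⊆ Sum.inl ⁻¹' insert w Z} ∪ Sum.inr ⁻¹' insert w Z)
        = rk M (Sum.inl ⁻¹' Z) + rk N ({D | Circuit M D ∧ D ⊆ Sum.inl ⁻¹' Z} ∪ Sum.inr ⁻¹' Z) →
      rk M (Sum.inl ⁻¹' insert w (insert z Z))
        + rk N ({D | Circuit M D ∧ D ⊆ Sum.inl ⁻¹' insert w (insert z Z)}
          ∪ Sum.inr ⁻¹' insert w (insert z Z))
        = rk M (Sum.inl ⁻¹' Z)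
          + rk N ({D | Circuit M D ∧ D ⊆ Sum.inl ⁻¹' Z} ∪ Sum.inr ⁻¹' Z) := by
    rintro Z (e | c) (g | c') hZ hz hw h1 h2
    · rw [preimage_inl_insert_inl, preimage_inr_insert_inl] at h1 h2 ⊢
      rw [preimage_inl_insert_inl, preimage_inr_insert_inl]
      exact sub_aux hM hNE h hNfin _ ((hpre_r hZ).trans hB₀E) (hpre_l hZ)
        (hinlEK.1 hz) (hinlEK.1 hw) h1 h2
    · rw [preimage_inl_insert_inl, preimage_inr_insert_inl] at h1
      rw [preimage_inl_insert_inr, preimage_inr_insert_inr, union_insert] at h2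
      rw [preimage_inl_insert_inr, preimage_inr_insert_inr, preimage_inl_insert_inl,
        preimage_inr_insert_inl]
      have h2' : rk N (insert c' ({D | Circuit M D ∧ D ⊆ Sum.inl ⁻¹' Z} ∪ Sum.inr ⁻¹' Z))
          = rk N ({D | Circuit M D ∧ D ⊆ Sum.inl ⁻¹' Z} ∪ Sum.inr ⁻¹' Z) := by omega
      exact mix_aux hM hNE hNfin ((hpre_r hZ).trans hB₀E) (hpre_l hZ)
        (hB₀E (hinrEK.1 hw)) h1 h2'
    · rw [preimage_inl_insert_inr, preimage_inr_insert_inr, union_insert] at h1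
      rw [preimage_inl_insert_inl, preimage_inr_insert_inl] at h2
      rw [preimage_inl_insert_inl, preimage_inr_insert_inl, preimage_inl_insert_inr,
        preimage_inr_insert_inr]
      have h1' : rk N (insert c ({D | Circuit M D ∧ D ⊆ Sum.inl ⁻¹' Z} ∪ Sum.inr ⁻¹' Z))
          = rk N ({D | Circuit M D ∧ D ⊆ Sum.inl ⁻¹' Z} ∪ Sum.inr ⁻¹' Z) := by omega
      exact mix_aux hM hNE hNfin ((hpre_r hZ).trans hB₀E) (hpre_l hZ)
        (hB₀E (hinrEK.1 hz)) h2 h1'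
    · rw [preimage_inl_insert_inr, preimage_inr_insert_inr, union_insert] at h1 h2
      rw [preimage_inl_insert_inr, preimage_inr_insert_inr, preimage_inl_insert_inr,
        preimage_inr_insert_inr, union_insert, union_insert]
      have h1' : rk N (insert c ({D | Circuit M D ∧ D ⊆ Sum.inl ⁻¹' Z} ∪ Sum.inr ⁻¹' Z))
          = rk N ({D | Circuit M D ∧ D ⊆ Sum.inl ⁻¹' Z} ∪ Sum.inr ⁻¹' Z) := by omega
      have h2' : rk N (insert c' ({D | Circuit M D ∧ D ⊆ Sum.inl ⁻¹' Z} ∪ Sum.inr ⁻¹' Z))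
          = rk N ({D | Circuit M D ∧ D ⊆ Sum.inl ⁻¹' Z} ∪ Sum.inr ⁻¹' Z) := by omega
      have := rk_insert_insert_eq hNfin
        (union_subset (hCXE _) ((hpre_r hZ).trans hB₀E))
        (hB₀E (hinrEK.1 hz)) (hB₀E (hinrEK.1 hw)) h1' h2'
      omega
  set K : Matroid (α ⊕ Set α) := rMat EK hEKfin
    (fun Z => rk M (Sum.inl ⁻¹' Z)
      + rk N ({D | Circuit M D ∧ D ⊆ Sum.inl ⁻¹' Z} ∪ Sum.inr ⁻¹' Z))
    hKmono hKins hK0 hKsub with hKdef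
  have hKE : K.E = EK := by rw [hKdef]; rfl
  have hKrk : ∀ Z ⊆ EK, rk K Z = rk M (Sum.inl ⁻¹' Z)
      + rk N ({D | Circuit M D ∧ D ⊆ Sum.inl ⁻¹' Z} ∪ Sum.inr ⁻¹' Z) := by
    intro Z hZ
    rw [hKdef]
    exact rMat_rk _ _ _ _ _ _ _ hZ
  have hKfin : K.E.Finite := by rw [hKE]; exact hEKfin
  -- lift data
  have hdisj : Disjoint (Sum.inl '' M.E) F₀ := by
    rw [Set.disjoint_left]
    rintro z ⟨x, -, rfl⟩ ⟨c, -, hc⟩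
    exact Sum.inr_ne_inl hc
  have hG : K.E \ F₀ = Sum.inl '' M.E := by
    rw [hKE, hEKdef, union_diff_right, hdisj.sdiff_eq_left]
  have hrange : Sum.inl '' M.E ⊆ range (Sum.inl : α → α ⊕ Set α) := image_subset_range _ _
  have hinrZ : ∀ {Z : Set (α ⊕ Set α)}, Z ⊆ Sum.inl '' M.E →
      Sum.inr ⁻¹' Z = (∅ : Set (Set α)) := by
    intro Z hZ
    ext c
    simp only [mem_preimage, mem_empty_iff_false, iff_false]
    intro hc
    obtain ⟨x, -, hx⟩ := hZ hc
    exact Sum.inl_ne_inr hx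
  have hXEof : ∀ {Z : Set (α ⊕ Set α)}, Z ⊆ Sum.inl '' M.E → Sum.inl ⁻¹' Z ⊆ M.E := by
    intro Z hZ x hx
    obtain ⟨y, hy, hxy⟩ := hZ hx
    rwa [Sum.inl_injective hxy] at hy
  -- deletion
  have hdelgr : (delete K F₀).E = Sum.inl '' M.E := by
    show K.E \ F₀ = _
    rw [hG]
  have hdel : delete K F₀ = L.map Sum.inl Sum.inl_injective.injOn := by
    refine eq_of_rk_eq ?_ ?_ ?_
    · rw [hdelgr, map_ground, hLE]
    · rw [hdelgr]; exact hM.image _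
    · intro Z hZ
      rw [hdelgr] at hZ
      have hZEK : Z ⊆ EK := hZ.trans subset_union_left
      have hZimg : Sum.inl '' (Sum.inl ⁻¹' Z) = Z :=
        image_preimage_eq_of_subset (hZ.trans hrange)
      show rk (K ↾ (K.E \ F₀)) Z = _
      rw [rk_restrict (show Z ⊆ K.E \ F₀ by rw [hG]; exact hZ), hKrk Z hZEK, hinrZ hZ,
        union_empty, ← hZimg, rk_map L Sum.inl _ (show Sum.inl ⁻¹' Z ⊆ L.E by
          rw [hLE]; exact hXEof hZ), hLrk _ (hXEof hZ),
        preimage_image_eq _ Sum.inl_injective]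
  -- contraction
  have hcongr : (contract K F₀).E = Sum.inl '' M.E := by
    show ((K✶ ↾ (K.E \ F₀))✶).E = _
    rw [dual_ground, restrict_ground_eq, hG]
  have hcon : contract K F₀ = M.map Sum.inl Sum.inl_injective.injOn := by
    refine eq_of_rk_eq (by rw [hcongr, map_ground]) (by rw [hcongr]; exact hM.image _) ?_
    intro Z hZ
    rw [hcongr] at hZ
    have hZEK : Z ⊆ EK := hZ.trans subset_union_left
    have hZimg : Sum.inl '' (Sum.inl ⁻¹' Z) = Z :=
      image_preimage_eq_of_subset (hZ.trans hrange)
    have hF₀K : F₀ ⊆ K.E := by rw [hKE]; exact subset_union_right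
    have hZG : Z ⊆ K.E \ F₀ := by rw [hG]; exact hZ
    have hcr := rk_contract (Q := K) hKfin hF₀K hZG
    have hpreF_l : Sum.inl ⁻¹' F₀ = (∅ : Set α) := by
      ext x
      simp [hF₀def]
    have hpreF_r : Sum.inr ⁻¹' F₀ = B₀ := by
      ext c
      simp [hF₀def]
    have hrkF : rk K F₀ = rk N B₀ := by
      rw [hKrk F₀ subset_union_right, hpreF_l, hpreF_r, hCempty, empty_union,
        rk_empty hM, zero_add]
    have hpreZl : Sum.inl ⁻¹' (Z ∪ F₀) = Sum.inl ⁻¹' Z := by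
      rw [preimage_union, hpreF_l, union_empty]
    have hpreZr : Sum.inr ⁻¹' (Z ∪ F₀) = B₀ := by
      rw [preimage_union, hpreF_r, hinrZ hZ, empty_union]
    have hrkZF : rk K (Z ∪ F₀) = rk M (Sum.inl ⁻¹' Z)
        + rk N ({D | Circuit M D ∧ D ⊆ Sum.inl ⁻¹' Z} ∪ B₀) := by
      rw [hKrk _ (union_subset hZEK subset_union_right), hpreZl, hpreZr]
    have hNB : rk N ({D | Circuit M D ∧ D ⊆ Sum.inl ⁻¹' Z} ∪ B₀) = rk N B₀ := by
      refine le_antisymm (rk_le_of_subset_closure hNfin ?_) (rk_mono hNfin subset_union_right)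
      rw [hB₀.closure_eq]
      exact union_subset (hCXE _) hB₀E
    have hgoalL : rk (contract K F₀) Z = rk M (Sum.inl ⁻¹' Z) := by omega
    rw [hgoalL, ← hZimg, rk_map M Sum.inl _ (hXEof hZ),
      preimage_image_eq _ Sum.inl_injective]
  -- rank equation
  have hCE : {C | Circuit M C ∧ C ⊆ M.E} = N.E := by
    rw [hNE]
    ext C
    simp only [mem_setOf_eq, and_iff_left_iff_imp]
    exact fun hC => hC.subset_ground'
  have hrank : rank L = rank M + rank N := by
    show rk L L.E = rk M M.E + rk N N.E
    rw [hLE, hLrk M.E subset_rfl, hCE]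
  exact ⟨L, hLE, hLrk, ⟨hLE, Set α, K, F₀, hdisj, by rw [hKE, hEKdef], hcon, hdel⟩, hrank⟩


end PaperLift
end

section
/- Let r ≥ 4 and t ≥ 3 be integers with r ≤ 2t−2. Then any two distinct members of 𝒞'(r,t) ∪ 𝒞''(r,t) intersect in at most r−2 elements, and consequently there exists a rank-r matroid K(r,t) on ground set [2t+2] in which every r-element subset is either a basis or a circuit-hyperplane and whose circuit-hyperplanes are exactly the members of 𝒞'(r,t) ∪ 𝒞''(r,t). -/
open Set Matroid
open scoped Matroid

namespace PaperLift

variable {α : Type} {β : Type}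

/-! ### Arc machinery -/

private lemma ncard_Iio' (n : ℕ) : (Set.Iio n).ncard = n := by
  rw [← Finset.coe_Iio, Set.ncard_coe_finset, Nat.card_Iio]

private lemma ncard_Ico' (a b : ℕ) : (Set.Ico a b).ncard = b - a := by
  rw [← Finset.coe_Ico, Set.ncard_coe_finset, Nat.card_Ico]

private lemma ncard_Icc' (a b : ℕ) : (Set.Icc a b).ncard = b + 1 - a := by
  rw [← Finset.coe_Icc, Set.ncard_coe_finset, Nat.card_Icc]

def arcF (t a k : ℕ) : ℕ := (k + a) % (2 * t) + 1

def Arc (t a l : ℕ) : Set ℕ := arcF t a '' Set.Iio l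

lemma arc_finite (t a l : ℕ) : (Arc t a l).Finite :=
  (Set.finite_Iio l).image _

lemma arc_mem_bounds {t a l x : ℕ} (ht : 1 ≤ t) (hx : x ∈ Arc t a l) :
    1 ≤ x ∧ x ≤ 2 * t := by
  obtain ⟨k, -, rfl⟩ := hx
  have := Nat.mod_lt (k + a) (show 0 < 2 * t by omega)
  simp only [arcF]
  omega

lemma arcF_injOn (t a l : ℕ) (hl : l ≤ 2 * t) : Set.InjOn (arcF t a) (Set.Iio l) := by
  intro x hx y hy h
  simp only [Set.mem_Iio] at hx hy
  have h' : (x + a) % (2 * t) = (y + a) % (2 * t) := by simp only [arcF] at h; omega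
  have h2 : x % (2 * t) = y % (2 * t) := Nat.ModEq.add_right_cancel' a h'
  rwa [Nat.mod_eq_of_lt (by omega), Nat.mod_eq_of_lt (by omega)] at h2

lemma arc_ncard (t a l : ℕ) (hl : l ≤ 2 * t) : (Arc t a l).ncard = l := by
  rw [Arc, Set.ncard_image_of_injOn (arcF_injOn t a l hl), ncard_Iio']

lemma arc_inter_ncard_le (t a b l l' c : ℕ) (ht : 1 ≤ t) (hl : l ≤ 2 * t) (hl' : l' ≤ 2 * t)
    (hclt : c < 2 * t) (hc : (c + b) % (2 * t) = a % (2 * t)) :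
    (Arc t a l ∩ Arc t b l').ncard ≤ (l' - c) + (l + c - 2 * t) := by
  have hsub : Arc t a l ∩ Arc t b l' ⊆
      arcF t a '' (Set.Iio (min l (l' - c)) ∪ Set.Ico (2 * t - c) l) := by
    rintro m ⟨⟨k, hk, rfl⟩, k', hk', hkk'⟩
    simp only [Set.mem_Iio] at hk hk'
    have heq : (k + a) % (2 * t) = (k' + b) % (2 * t) := by
      simp only [arcF] at hkk'; omega
    have e1 : ((k + c) + b) % (2 * t) = (k' + b) % (2 * t) := by
      rw [add_assoc, ← Nat.add_mod_mod, hc, Nat.add_mod_mod, heq]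
    have e2 : (k + c) % (2 * t) = k' := by
      have h3 := Nat.ModEq.add_right_cancel' b e1
      rwa [Nat.ModEq, Nat.mod_eq_of_lt (by omega : k' < 2 * t)] at h3
    refine ⟨k, ?_, rfl⟩
    rcases lt_or_ge (k + c) (2 * t) with h | h
    · left
      rw [Nat.mod_eq_of_lt h] at e2
      simp only [Set.mem_Iio, lt_min_iff]
      omega
    · right
      have hmod : (k + c) % (2 * t) = k + c - 2 * t := by
        rw [Nat.mod_eq_sub_mod h, Nat.mod_eq_of_lt (by omega)]
      simp only [Set.mem_Ico]
      omega
  have hfin : (Set.Iio (min l (l' - c)) ∪ Set.Ico (2 * t - c) l).Finite :=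
    (Set.finite_Iio _).union (Set.finite_Ico _ _)
  calc (Arc t a l ∩ Arc t b l').ncard
      ≤ (arcF t a '' (Set.Iio (min l (l' - c)) ∪ Set.Ico (2 * t - c) l)).ncard :=
        Set.ncard_le_ncard hsub (hfin.image _)
    _ ≤ (Set.Iio (min l (l' - c)) ∪ Set.Ico (2 * t - c) l).ncard :=
        Set.ncard_image_le hfin
    _ ≤ (Set.Iio (min l (l' - c))).ncard + (Set.Ico (2 * t - c) l).ncard :=
        Set.ncard_union_le _ _
    _ ≤ (l' - c) + (l + c - 2 * t) := by
        rw [ncard_Iio', ncard_Ico']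
        have := Nat.min_le_right l (l' - c)
        omega

lemma Ci_eq_arc (r t i : ℕ) : Ci r t i = Arc t (2 * (i - 1)) (r - 2) := by
  ext m
  simp only [Ci, Arc, arcF, Set.mem_image, Set.mem_Icc, Set.mem_Iio]
  constructor
  · rintro ⟨k, ⟨hk1, hk2⟩, rfl⟩
    exact ⟨k - 1, by omega, by rw [show k - 1 + 2 * (i - 1) = k + 2 * (i - 1) - 1 by omega]⟩
  · rintro ⟨k, hk, rfl⟩
    exact ⟨k + 1, ⟨by omega, by omega⟩,
      by rw [show k + 1 + 2 * (i - 1) - 1 = k + 2 * (i - 1) by omega]⟩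

lemma arc_union (t a r : ℕ) (hr : 4 ≤ r) :
    Arc t a (r - 2) ∪ Arc t (a + 2) (r - 2) = Arc t a r := by
  ext m
  simp only [Arc, arcF, Set.mem_union, Set.mem_image, Set.mem_Iio]
  constructor
  · rintro (⟨k, hk, rfl⟩ | ⟨k, hk, rfl⟩)
    · exact ⟨k, by omega, rfl⟩
    · exact ⟨k + 2, by omega, by rw [show k + 2 + a = k + (a + 2) by omega]⟩
  · rintro ⟨k, hk, rfl⟩
    rcases lt_or_ge k (r - 2) with h | h
    · exact Or.inl ⟨k, h, rfl⟩
    · exact Or.inr ⟨k - 2, by omega, by rw [show k - 2 + (a + 2) = k + a by omega]⟩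

/-- Structure of members of `CC' ∪ CC''`. -/
lemma mem_CCall_elim {r t : ℕ} (hr : 4 ≤ r) {S : Set ℕ}
    (hS : S ∈ CC' r t ∪ CC'' r t) :
    (∃ i, 1 ≤ i ∧ i ≤ t ∧ S = Arc t (2 * (i - 1)) (r - 2) ∪ {2 * t + 1, 2 * t + 2}) ∨
    (∃ i, 1 ≤ i ∧ i ≤ t - 1 ∧ S = Arc t (2 * (i - 1)) r) := by
  rcases hS with ⟨i, hi, rfl⟩ | ⟨i, hi, rfl⟩
  · simp only [Set.mem_Icc] at hi
    exact Or.inl ⟨i, hi.1, hi.2, by show Ci r t i ∪ _ = _; rw [Ci_eq_arc]⟩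
  · simp only [Set.mem_Icc] at hi
    refine Or.inr ⟨i, hi.1, hi.2, ?_⟩
    show Ci r t i ∪ Ci r t (i+1) = _
    rw [Ci_eq_arc, Ci_eq_arc, show 2 * (i + 1 - 1) = 2 * (i - 1) + 2 by omega,
      arc_union t _ r hr]

lemma arcs_bound (t l i j : ℕ) (ht : 3 ≤ t) (hl : l ≤ 2 * t) (hi1 : 1 ≤ i) (hit : i ≤ t)
    (hj1 : 1 ≤ j) (hjt : j ≤ t) (hij : i ≠ j) :
    ∃ c, 2 ≤ c ∧ c ≤ 2 * t - 2 ∧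
      (Arc t (2 * (i - 1)) l ∩ Arc t (2 * (j - 1)) l).ncard ≤ (l - c) + (l + c - 2 * t) := by
  rcases Nat.lt_or_ge i j with h | h
  · refine ⟨2 * t - 2 * (j - i), by omega, by omega, ?_⟩
    refine arc_inter_ncard_le t _ _ l l _ (by omega) hl hl (by omega) ?_
    rw [show 2 * t - 2 * (j - i) + 2 * (j - 1) = 2 * (i - 1) + 2 * t by omega,
      Nat.add_mod_right]
  · have h' : j < i := by omega
    refine ⟨2 * (i - j), by omega, by omega, ?_⟩
    refine arc_inter_ncard_le t _ _ l l _ (by omega) hl hl (by omega) ?_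
    rw [show 2 * (i - j) + 2 * (j - 1) = 2 * (i - 1) by omega]

/-! ### Cardinalities and the intersection bound -/

lemma pair_arc_disjoint (t a l : ℕ) (ht : 1 ≤ t) :
    Disjoint ({2 * t + 1, 2 * t + 2} : Set ℕ) (Arc t a l) := by
  rw [Set.disjoint_left]
  rintro x hx hx'
  have := arc_mem_bounds ht hx'
  rcases hx with rfl | rfl <;> omega

lemma CCall_ncard {r t : ℕ} (hr : 4 ≤ r) (ht : 3 ≤ t) (hrt : r + 2 ≤ 2 * t) {S : Set ℕ}
    (hS : S ∈ CC' r t ∪ CC'' r t) :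
    S.ncard = r ∧ S ⊆ Set.Icc 1 (2 * t + 2) ∧ S.Finite := by
  rcases mem_CCall_elim hr hS with ⟨i, hi1, hi2, rfl⟩ | ⟨i, hi1, hi2, rfl⟩
  · have hfin : (Arc t (2 * (i - 1)) (r - 2) ∪ {2 * t + 1, 2 * t + 2} : Set ℕ).Finite :=
      (arc_finite _ _ _).union ((Set.finite_singleton _).insert _)
    refine ⟨?_, ?_, hfin⟩
    · rw [Set.ncard_union_eq (pair_arc_disjoint t _ _ (by omega)).symm (arc_finite _ _ _)
        ((Set.finite_singleton _).insert _),
        arc_ncard _ _ _ (by omega), Set.ncard_pair (by omega)]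
      omega
    · rintro x (hx | hx)
      · have := arc_mem_bounds (by omega : 1 ≤ t) hx
        simp only [Set.mem_Icc]; omega
      · rcases hx with rfl | rfl <;> simp only [Set.mem_Icc] <;> omega
  · refine ⟨arc_ncard _ _ _ (by omega), ?_, arc_finite _ _ _⟩
    intro x hx
    have := arc_mem_bounds (by omega : 1 ≤ t) hx
    simp only [Set.mem_Icc]; omega

/-- Part 1 : distinct members of `CC' ∪ CC''` meet in at most `r - 2` elements. -/
lemma inter_le (r t : ℕ) (hr : 4 ≤ r) (ht : 3 ≤ t) (hrt : r + 2 ≤ 2 * t) :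
    ∀ S₁ ∈ CC' r t ∪ CC'' r t, ∀ S₂ ∈ CC' r t ∪ CC'' r t, S₁ ≠ S₂ →
      (S₁ ∩ S₂).ncard ≤ r - 2 := by
  have ht1 : (1 : ℕ) ≤ t := by omega
  -- mixed case helper
  have hmixed : ∀ a b, ((Arc t a (r - 2) ∪ ({2 * t + 1, 2 * t + 2} : Set ℕ)) ∩
      Arc t b r).ncard ≤ r - 2 := by
    intro a b
    have hsub : (Arc t a (r - 2) ∪ ({2 * t + 1, 2 * t + 2} : Set ℕ)) ∩ Arc t b r ⊆
        Arc t a (r - 2) := by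
      rintro x ⟨hx1 | hx1, hx2⟩
      · exact hx1
      · exact absurd hx2 (fun h => by
          have := arc_mem_bounds ht1 h
          rcases hx1 with rfl | rfl <;> omega)
    calc ((Arc t a (r - 2) ∪ ({2 * t + 1, 2 * t + 2} : Set ℕ)) ∩ Arc t b r).ncard
        ≤ (Arc t a (r - 2)).ncard := Set.ncard_le_ncard hsub (arc_finite _ _ _)
      _ = r - 2 := arc_ncard _ _ _ (by omega)
  intro S₁ hS₁ S₂ hS₂ hne
  rcases mem_CCall_elim hr hS₁ with ⟨i, hi1, hi2, rfl⟩ | ⟨i, hi1, hi2, rfl⟩ <;>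
    rcases mem_CCall_elim hr hS₂ with ⟨j, hj1, hj2, rfl⟩ | ⟨j, hj1, hj2, rfl⟩
  · -- CC' vs CC'
    have hij : i ≠ j := by rintro rfl; exact hne rfl
    obtain ⟨c, hc1, hc2, hcle⟩ := arcs_bound t (r - 2) i j ht (by omega) hi1 hi2 hj1 hj2 hij
    have hsub : (Arc t (2 * (i - 1)) (r - 2) ∪ {2 * t + 1, 2 * t + 2}) ∩
        (Arc t (2 * (j - 1)) (r - 2) ∪ {2 * t + 1, 2 * t + 2}) ⊆
        (Arc t (2 * (i - 1)) (r - 2) ∩ Arc t (2 * (j - 1)) (r - 2)) ∪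
          ({2 * t + 1, 2 * t + 2} : Set ℕ) := by
      rintro x ⟨hx1 | hx1, hx2 | hx2⟩
      · exact Or.inl ⟨hx1, hx2⟩
      all_goals exact Or.inr ‹_›
    have hfinbig : ((Arc t (2 * (i - 1)) (r - 2) ∩ Arc t (2 * (j - 1)) (r - 2)) ∪
        ({2 * t + 1, 2 * t + 2} : Set ℕ)).Finite :=
      ((arc_finite _ _ _).subset Set.inter_subset_left).union
        ((Set.finite_singleton _).insert _)
    calc ((Arc t (2 * (i - 1)) (r - 2) ∪ {2 * t + 1, 2 * t + 2}) ∩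
        (Arc t (2 * (j - 1)) (r - 2) ∪ {2 * t + 1, 2 * t + 2})).ncard
        ≤ _ := Set.ncard_le_ncard hsub hfinbig
      _ ≤ (Arc t (2 * (i - 1)) (r - 2) ∩ Arc t (2 * (j - 1)) (r - 2)).ncard +
          ({2 * t + 1, 2 * t + 2} : Set ℕ).ncard := Set.ncard_union_le _ _
      _ ≤ ((r - 2 - c) + (r - 2 + c - 2 * t)) + 2 := by
          rw [Set.ncard_pair (by omega : 2 * t + 1 ≠ 2 * t + 2)]
          omega
      _ ≤ r - 2 := by omega
  · exact hmixed _ _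
  · rw [Set.inter_comm]; exact hmixed _ _
  · -- CC'' vs CC''
    have hij : i ≠ j := by rintro rfl; exact hne rfl
    obtain ⟨c, hc1, hc2, hcle⟩ := arcs_bound t r i j ht (by omega) hi1 (by omega) hj1
      (by omega) hij
    omega
/-! ### The matroid K(r,t) -/

def KIndep (r t : ℕ) (S : Set ℕ) : Prop :=
  S ⊆ Set.Icc 1 (2 * t + 2) ∧ S.ncard ≤ r ∧ S ∉ CC' r t ∪ CC'' r t

lemma KIndep_subset {r t : ℕ} (hr : 4 ≤ r) (ht : 3 ≤ t) (hrt : r + 2 ≤ 2 * t)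
    {I J : Set ℕ} (hJ : KIndep r t J) (hIJ : I ⊆ J) : KIndep r t I := by
  have hJfin : J.Finite := (Set.finite_Icc 1 (2 * t + 2)).subset hJ.1
  have hle : I.ncard ≤ J.ncard := Set.ncard_le_ncard hIJ hJfin
  refine ⟨hIJ.trans hJ.1, le_trans hle hJ.2.1, fun hIC => ?_⟩
  have hIcard : I.ncard = r := (CCall_ncard hr ht hrt hIC).1
  have hJle := hJ.2.1
  have : I = J := Set.eq_of_subset_of_ncard_le hIJ (by omega) hJfin
  exact hJ.2.2 (this ▸ hIC)

lemma KIndep_aug {r t : ℕ} (hr : 4 ≤ r) (ht : 3 ≤ t) (hrt : r + 2 ≤ 2 * t)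
    {I J : Set ℕ} (hI : KIndep r t I) (hJ : KIndep r t J) (hlt : I.ncard < J.ncard) :
    ∃ e ∈ J, e ∉ I ∧ KIndep r t (insert e I) := by
  have hIfin : I.Finite := (Set.finite_Icc 1 (2 * t + 2)).subset hI.1
  have hJfin : J.Finite := (Set.finite_Icc 1 (2 * t + 2)).subset hJ.1
  have hIle := hI.2.1
  have hJle := hJ.2.1
  have hne : ¬ J ⊆ I := fun h => absurd (Set.ncard_le_ncard h hIfin) (by omega)
  obtain ⟨x, hxJ, hxI⟩ := Set.not_subset.mp hne
  by_cases h : I.ncard + 1 < r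
  · refine ⟨x, hxJ, hxI, Set.insert_subset (hJ.1 hxJ) hI.1, ?_, fun hC => ?_⟩
    · rw [Set.ncard_insert_of_notMem hxI hIfin]; omega
    · have := (CCall_ncard hr ht hrt hC).1
      rw [Set.ncard_insert_of_notMem hxI hIfin] at this; omega
  have hIcard : I.ncard = r - 1 := by omega
  have hJcard : J.ncard = r := by omega
  by_cases hx : KIndep r t (insert x I)
  · exact ⟨x, hxJ, hxI, hx⟩
  have hxcard : (insert x I).ncard = r := by
    rw [Set.ncard_insert_of_notMem hxI hIfin]; omega
  have hxC : insert x I ∈ CC' r t ∪ CC'' r t := by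
    by_contra hc
    exact hx ⟨Set.insert_subset (hJ.1 hxJ) hI.1, hxcard.le, hc⟩
  by_cases hy : ∃ y ∈ J, y ∉ I ∧ y ≠ x
  · obtain ⟨y, hyJ, hyI, hyx⟩ := hy
    by_cases hyK : KIndep r t (insert y I)
    · exact ⟨y, hyJ, hyI, hyK⟩
    have hycard : (insert y I).ncard = r := by
      rw [Set.ncard_insert_of_notMem hyI hIfin]; omega
    have hyC : insert y I ∈ CC' r t ∪ CC'' r t := by
      by_contra hc
      exact hyK ⟨Set.insert_subset (hJ.1 hyJ) hI.1, hycard.le, hc⟩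
    exfalso
    have hne2 : insert x I ≠ insert y I := by
      intro hEq
      have : x ∈ insert y I := hEq ▸ Set.mem_insert x I
      rcases this with h' | h'
      · exact hyx h'.symm
      · exact hxI h'
    have hle := inter_le r t hr ht hrt _ hxC _ hyC hne2
    have hsub : I ⊆ insert x I ∩ insert y I :=
      Set.subset_inter (Set.subset_insert _ _) (Set.subset_insert _ _)
    have hfin2 : (insert x I ∩ insert y I).Finite :=
      (hIfin.insert x).subset Set.inter_subset_left
    have := Set.ncard_le_ncard hsub hfin2
    omega
  · push_neg at hy
    have hJsub : J ⊆ insert x I := by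
      intro y hyJ
      by_cases h' : y ∈ I
      · exact Set.mem_insert_of_mem _ h'
      · exact (hy y hyJ h') ▸ Set.mem_insert _ _
    have hJeq : J = insert x I :=
      Set.eq_of_subset_of_ncard_le hJsub (by omega) (hIfin.insert x)
    exact absurd (hJeq ▸ hxC) hJ.2.2

noncomputable def Kmat (r t : ℕ) (hr : 4 ≤ r) (ht : 3 ≤ t) (hrt : r + 2 ≤ 2 * t) :
    Matroid ℕ :=
  (IndepMatroid.ofFinite (Set.finite_Icc 1 (2 * t + 2)) (KIndep r t)
    ⟨Set.empty_subset _, by simp only [Set.ncard_empty]; omega,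
      fun hC => by have := (CCall_ncard hr ht hrt hC).1; simp [Set.ncard_empty] at this; omega⟩
    (fun I J hJ hIJ => KIndep_subset hr ht hrt hJ hIJ)
    (fun I J hI hJ hlt => KIndep_aug hr ht hrt hI hJ hlt)
    (fun I hI => hI.1)).matroid

variable {r t : ℕ} {hr : 4 ≤ r} {ht : 3 ≤ t} {hrt : r + 2 ≤ 2 * t}

lemma Kmat_E : (Kmat r t hr ht hrt).E = Set.Icc 1 (2 * t + 2) := by
  rfl

lemma Kmat_indep {S : Set ℕ} : (Kmat r t hr ht hrt).Indep S ↔ KIndep r t S := by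
  rfl

lemma Kmat_dep {S : Set ℕ} : (Kmat r t hr ht hrt).Dep S ↔
    S ⊆ Set.Icc 1 (2 * t + 2) ∧ (r < S.ncard ∨ S ∈ CC' r t ∪ CC'' r t) := by
  rw [Matroid.dep_iff, Kmat_indep, Kmat_E]
  constructor
  · rintro ⟨hni, hsub⟩
    refine ⟨hsub, ?_⟩
    by_contra h
    push_neg at h
    exact hni ⟨hsub, by omega, h.2⟩
  · rintro ⟨hsub, h⟩
    refine ⟨fun hi => ?_, hsub⟩
    rcases h with h | h
    · exact absurd hi.2.1 (by omega)
    · exact hi.2.2 h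

lemma exists_B0 (r t : ℕ) (hr : 4 ≤ r) (ht : 3 ≤ t) (hrt : r + 2 ≤ 2 * t) :
    ∃ B0 : Set ℕ, B0 ⊆ Set.Icc 1 (2 * t + 2) ∧ B0.ncard = r ∧
      B0 ∉ CC' r t ∪ CC'' r t := by
  refine ⟨insert (2 * t + 1) (Set.Icc 1 (r - 1)), ?_, ?_, ?_⟩
  · rintro x (rfl | hx)
    · simp only [Set.mem_Icc]; omega
    · simp only [Set.mem_Icc] at hx ⊢; omega
  · rw [Set.ncard_insert_of_notMem (by simp only [Set.mem_Icc]; omega) (Set.finite_Icc _ _),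
      ncard_Icc']
    omega
  · intro hC
    rcases mem_CCall_elim hr hC with ⟨i, _, _, hEq⟩ | ⟨i, _, _, hEq⟩
    · have hmem : (2 * t + 2 : ℕ) ∈ insert (2 * t + 1) (Set.Icc 1 (r - 1)) := by
        rw [hEq]; exact Or.inr (Or.inr rfl)
      rcases hmem with h | h
      · omega
      · simp only [Set.mem_Icc] at h; omega
    · have hmem : (2 * t + 1 : ℕ) ∈ Arc t (2 * (i - 1)) r := hEq ▸ Set.mem_insert _ _
      have := arc_mem_bounds (by omega : 1 ≤ t) hmem
      omega

lemma Kmat_base_of {S : Set ℕ} (hS : S ⊆ Set.Icc 1 (2 * t + 2)) (hcard : S.ncard = r)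
    (hnC : S ∉ CC' r t ∪ CC'' r t) : (Kmat r t hr ht hrt).IsBase S := by
  rw [Matroid.isBase_iff_maximal_indep]
  refine ⟨Kmat_indep.mpr ⟨hS, hcard.le, hnC⟩, fun I hI hSI => ?_⟩
  rw [Kmat_indep] at hI
  have hIle := hI.2.1
  have hIfin : I.Finite := (Set.finite_Icc 1 (2 * t + 2)).subset hI.1
  exact (Set.eq_of_subset_of_ncard_le hSI (by omega) hIfin).symm.subset

lemma Kmat_base_elim {S : Set ℕ} (hB : (Kmat r t hr ht hrt).IsBase S) :
    S ⊆ Set.Icc 1 (2 * t + 2) ∧ S.ncard = r ∧ S ∉ CC' r t ∪ CC'' r t := by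
  have hI := Kmat_indep.mp hB.indep
  refine ⟨hI.1, ?_, hI.2.2⟩
  have hIle := hI.2.1
  by_contra h
  have hlt : S.ncard < r := by omega
  obtain ⟨B0, hB0sub, hB0card, hB0nC⟩ := exists_B0 r t hr ht hrt
  obtain ⟨e, heB0, heS, hins⟩ :=
    KIndep_aug hr ht hrt hI ⟨hB0sub, hB0card.le, hB0nC⟩ (by omega)
  have hind : (Kmat r t hr ht hrt).Indep (insert e S) := Kmat_indep.mpr hins
  have := hB.eq_of_subset_indep hind (Set.subset_insert e S)
  exact heS (this ▸ Set.mem_insert e S)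

lemma Kmat_rank : rank (Kmat r t hr ht hrt) = r := by
  rw [rank, rk]
  have hset : {n | ∃ I, (Kmat r t hr ht hrt).Indep I ∧ I ⊆ (Kmat r t hr ht hrt).E ∧
      I.ncard = n} = Set.Iic r := by
    ext n
    simp only [Set.mem_setOf_eq, Set.mem_Iic]
    constructor
    · rintro ⟨I, hI, -, rfl⟩
      exact (Kmat_indep.mp hI).2.1
    · intro hn
      obtain ⟨B0, h1, h2, h3⟩ := exists_B0 r t hr ht hrt
      obtain ⟨I, hIB0, hIcard⟩ := Set.exists_subset_card_eq (h2 ▸ hn)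
      exact ⟨I, Kmat_indep.mpr (KIndep_subset hr ht hrt ⟨h1, h2.le, h3⟩ hIB0),
        by rw [Kmat_E]; exact hIB0.trans h1, hIcard⟩
  rw [hset, csSup_Iic]
/-! ### Circuit-hyperplanes of K(r,t) -/

lemma Kmat_circuit_of_mem {S : Set ℕ} (hS : S ∈ CC' r t ∪ CC'' r t) :
    Circuit (Kmat r t hr ht hrt) S := by
  obtain ⟨hcard, hsub, hfin⟩ := CCall_ncard hr ht hrt hS
  constructor
  · rw [Kmat_dep]
    exact ⟨hsub, Or.inr hS⟩
  · intro D hD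
    rw [Kmat_indep]
    have hlt : D.ncard < r := hcard ▸ Set.ncard_lt_ncard hD hfin
    exact ⟨hD.subset.trans hsub, by omega, fun hDC => by
      have := (CCall_ncard hr ht hrt hDC).1; omega⟩

lemma Kmat_flat_of_mem (hr : 4 ≤ r) (ht : 3 ≤ t) (hrt : r + 2 ≤ 2 * t) {S : Set ℕ}
    (hS : S ∈ CC' r t ∪ CC'' r t) : (Kmat r t hr ht hrt).IsFlat S := by
  obtain ⟨hcard, hsub, hfin⟩ := CCall_ncard hr ht hrt hS
  refine ⟨?_, by rw [Kmat_E]; exact hsub⟩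
  intro I X hIS hIX
  have hIk := Kmat_indep.mp hIS.indep
  have hIfin : I.Finite := hfin.subset hIS.subset
  have hIcard : I.ncard = r - 1 := by
    by_contra h
    have hss : I ⊂ S := hIS.subset.ssubset_of_ne (fun hEq => hIk.2.2 (hEq ▸ hS))
    have hlt : I.ncard < r := hcard ▸ Set.ncard_lt_ncard hss hfin
    have hns : ¬ S ⊆ I := fun hsub2 => by
      have := Set.ncard_le_ncard hsub2 hIfin; omega
    obtain ⟨y, hyS, hyI⟩ := Set.not_subset.mp hns
    have hins : (Kmat r t hr ht hrt).Indep (insert y I) := by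
      rw [Kmat_indep]
      refine ⟨Set.insert_subset (hsub hyS) hIk.1,
        by rw [Set.ncard_insert_of_notMem hyI hIfin]; omega, fun hmem => ?_⟩
      have := (CCall_ncard hr ht hrt hmem).1
      rw [Set.ncard_insert_of_notMem hyI hIfin] at this
      omega
    exact hyI (hIS.mem_of_insert_indep hyS hins)
  intro x hxX
  by_contra hxS
  have hxI : x ∉ I := fun h => hxS (hIS.subset h)
  have hdep := hIX.insert_dep ⟨hxX, hxI⟩
  rw [Kmat_dep] at hdep
  have hinscard : (insert x I).ncard = r := by
    rw [Set.ncard_insert_of_notMem hxI hIfin]; omega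
  have hinsC : insert x I ∈ CC' r t ∪ CC'' r t := by
    rcases hdep.2 with h | h
    · omega
    · exact h
  have hne : insert x I ≠ S := fun hEq => hxS (hEq ▸ Set.mem_insert x I)
  have hle := inter_le r t hr ht hrt _ hinsC _ hS hne
  have hsub2 : I ⊆ insert x I ∩ S := Set.subset_inter (Set.subset_insert x I) hIS.subset
  have := Set.ncard_le_ncard hsub2 (hfin.subset Set.inter_subset_right)
  omega

lemma Kmat_hyperplane_of_mem (hr : 4 ≤ r) (ht : 3 ≤ t) (hrt : r + 2 ≤ 2 * t) {S : Set ℕ}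
    (hS : S ∈ CC' r t ∪ CC'' r t) : Hyperplane (Kmat r t hr ht hrt) S := by
  obtain ⟨hcard, hsub, hfin⟩ := CCall_ncard hr ht hrt hS
  refine ⟨Kmat_flat_of_mem hr ht hrt hS, ?_, ?_⟩
  · intro hEq
    rw [Kmat_E] at hEq
    have hE : (Set.Icc 1 (2 * t + 2) : Set ℕ).ncard = 2 * t + 2 := by
      rw [ncard_Icc']; omega
    rw [hEq, hE] at hcard
    omega
  · intro F hF hSF
    obtain ⟨x, hxF, hxS⟩ := exists_of_ssubset hSF
    have hSne : S.Nonempty := by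
      rw [Set.nonempty_iff_ne_empty]
      rintro rfl
      simp only [Set.ncard_empty] at hcard
      omega
    obtain ⟨y, hyS⟩ := hSne
    have hxSd : x ∉ S \ {y} := fun h => hxS h.1
    have hSd_fin : (S \ {y}).Finite := hfin.diff
    have hSdcard : (S \ {y}).ncard = r - 1 := by
      rw [Set.ncard_diff_singleton_of_mem hyS, hcard]
    have hIfin : (insert x (S \ {y})).Finite := hSd_fin.insert x
    have hIcard : (insert x (S \ {y})).ncard = r := by
      rw [Set.ncard_insert_of_notMem hxSd hSd_fin, hSdcard]; omega
    have hFE : F ⊆ Set.Icc 1 (2 * t + 2) := by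
      rw [← Kmat_E (hr := hr) (ht := ht) (hrt := hrt)]; exact hF.subset_ground
    have hIE : insert x (S \ {y}) ⊆ Set.Icc 1 (2 * t + 2) :=
      Set.insert_subset (hFE hxF) (Set.diff_subset.trans hsub)
    have hInC : insert x (S \ {y}) ∉ CC' r t ∪ CC'' r t := by
      intro hC
      have hne : insert x (S \ {y}) ≠ S := fun h => hxS (h ▸ Set.mem_insert x _)
      have hle := inter_le r t hr ht hrt _ hC _ hS hne
      have hsub2 : S \ {y} ⊆ insert x (S \ {y}) ∩ S :=
        Set.subset_inter (Set.subset_insert _ _) Set.diff_subset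
      have := Set.ncard_le_ncard hsub2 (hfin.subset Set.inter_subset_right)
      omega
    have hIindep : (Kmat r t hr ht hrt).Indep (insert x (S \ {y})) :=
      Kmat_indep.mpr ⟨hIE, hIcard.le, hInC⟩
    have hIF : insert x (S \ {y}) ⊆ F :=
      Set.insert_subset hxF (Set.diff_subset.trans hSF.subset)
    have hbasisF : (Kmat r t hr ht hrt).IsBasis (insert x (S \ {y})) F := by
      refine hIindep.isBasis_of_forall_insert hIF (fun e he => ?_)
      rw [Kmat_dep]
      refine ⟨Set.insert_subset (hFE he.1) hIE, Or.inl ?_⟩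
      rw [Set.ncard_insert_of_notMem he.2 hIfin, hIcard]
      omega
    have hbasisE : (Kmat r t hr ht hrt).IsBasis (insert x (S \ {y}))
        (Kmat r t hr ht hrt).E := by
      refine hIindep.isBasis_of_forall_insert (by rw [Kmat_E]; exact hIE) (fun e he => ?_)
      rw [Kmat_dep]
      have heE : e ∈ Set.Icc 1 (2 * t + 2) := by
        rw [← Kmat_E (hr := hr) (ht := ht) (hrt := hrt)]; exact he.1
      refine ⟨Set.insert_subset heE hIE, Or.inl ?_⟩
      rw [Set.ncard_insert_of_notMem he.2 hIfin, hIcard]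
      omega
    exact subset_antisymm hF.subset_ground (hF.subset_of_isBasis_of_isBasis hbasisF hbasisE)

lemma Kmat_mem_of_circuitHyperplane {S : Set ℕ}
    (h : CircuitHyperplane (Kmat r t hr ht hrt) S) : S ∈ CC' r t ∪ CC'' r t := by
  obtain ⟨⟨hdep, hmin⟩, hflat, hneE, -⟩ := h
  rw [Kmat_dep] at hdep
  obtain ⟨hsub, hor⟩ := hdep
  rcases hor with hgt | hmem
  swap
  · exact hmem
  exfalso
  have hfin : S.Finite := (Set.finite_Icc _ _).subset hsub
  obtain ⟨B, hBS, hBcard⟩ := Set.exists_subset_card_eq (le_of_lt hgt)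
  have hBssub : B ⊂ S := hBS.ssubset_of_ne (fun h' => by rw [h'] at hBcard; omega)
  have hBindep : (Kmat r t hr ht hrt).Indep B := hmin B hBssub
  have hBfin : B.Finite := hfin.subset hBS
  have h1 : (Kmat r t hr ht hrt).IsBasis B S := by
    refine hBindep.isBasis_of_forall_insert hBS (fun e he => ?_)
    rw [Kmat_dep]
    refine ⟨Set.insert_subset (hsub he.1) (hBS.trans hsub), Or.inl ?_⟩
    rw [Set.ncard_insert_of_notMem he.2 hBfin, hBcard]
    omega
  have h2 : (Kmat r t hr ht hrt).IsBasis B (Kmat r t hr ht hrt).E := by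
    refine hBindep.isBasis_of_forall_insert
      (by rw [Kmat_E]; exact hBS.trans hsub) (fun e he => ?_)
    rw [Kmat_dep]
    have heE : e ∈ Set.Icc 1 (2 * t + 2) := by
      rw [← Kmat_E (hr := hr) (ht := ht) (hrt := hrt)]; exact he.1
    refine ⟨Set.insert_subset heE (hBS.trans hsub), Or.inl ?_⟩
    rw [Set.ncard_insert_of_notMem he.2 hBfin, hBcard]
    omega
  have hES := hflat.subset_of_isBasis_of_isBasis h1 h2
  exact hneE (subset_antisymm (by rw [Kmat_E]; exact hsub) hES)

/-- Any two distinct members of `𝒞'(r,t) ∪ 𝒞''(r,t)` intersect in at most `r - 2` elements,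
and consequently the matroid `K(r,t)` exists. -/
theorem stmt7 (r t : ℕ) (hr : 4 ≤ r) (ht : 3 ≤ t) (hrt : r + 2 ≤ 2 * t) :
    (∀ S₁ ∈ CC' r t ∪ CC'' r t, ∀ S₂ ∈ CC' r t ∪ CC'' r t, S₁ ≠ S₂ →
      (S₁ ∩ S₂).ncard ≤ r - 2) ∧
    ∃ K : Matroid ℕ, IsKrt r t K := by
  refine ⟨inter_le r t hr ht hrt, Kmat r t hr ht hrt, Kmat_E, Kmat_rank, ?_, ?_⟩
  · intro S hSE hScard
    rw [Kmat_E (hr := hr) (ht := ht) (hrt := hrt)] at hSE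
    by_cases h : S ∈ CC' r t ∪ CC'' r t
    · exact Or.inr ⟨Kmat_circuit_of_mem h, Kmat_hyperplane_of_mem hr ht hrt h⟩
    · exact Or.inl (Kmat_base_of hSE hScard h)
  · intro S
    exact ⟨Kmat_mem_of_circuitHyperplane,
      fun h => ⟨Kmat_circuit_of_mem h, Kmat_hyperplane_of_mem hr ht hrt h⟩⟩

end PaperLift
end

section
/- Let r ≥ 4 and t ≥ 3 be integers with r ≤ 2t−2, let K be a rank-r matroid on ground set [2t+2] in which every r-element subset is either a basis or a circuit-hyperplane and whose circuit-hyperplanes are exactly the members of 𝒞'(r,t) ∪ 𝒞''(r,t), let X = {2t+1, 2t+2}, let M = K/X and L = K∖X. Then: (a) for each i ∈ [t−1], C_i and C_{i+1} are circuits of M with |C_i ∪ C_{i+1}| − r_M(C_i ∪ C_{i+1}) = 2; (b) C₁ and C_t are circuits of M with |C₁ ∪ C_t| − r_M(C₁ ∪ C_t) = 2; (c) for each i ∈ [t−1], r_L(C_i ∪ C_{i+1}) − r_M(C_i ∪ C_{i+1}) = 1; and (d) r_L(C₁ ∪ C_t) − r_M(C₁ ∪ C_t) = 2. -/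
open Set Matroid
open scoped Matroid

namespace PaperLift

variable {α : Type} {β : Type}

lemma rk_eq {M : Matroid α} {A : Set α} {n : ℕ}
    (hw : ∃ I, M.Indep I ∧ I ⊆ A ∧ I.ncard = n)
    (hb : ∀ I, M.Indep I → I ⊆ A → I.ncard ≤ n) : rk M A = n := by
  have hbdd : BddAbove {m | ∃ I, M.Indep I ∧ I ⊆ A ∧ I.ncard = m} := by
    refine ⟨n, fun m hm => ?_⟩
    obtain ⟨I, hI, hIA, rfl⟩ := hm
    exact hb I hI hIA
  refine le_antisymm (csSup_le ⟨n, hw⟩ ?_) (le_csSup hbdd hw)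
  rintro m ⟨I, hI, hIA, rfl⟩
  exact hb I hI hIA

@[simp] lemma contract_ground (M : Matroid α) (C : Set α) :
    (contract M C).E = M.E \ C := rfl

@[simp] lemma delete_ground (M : Matroid α) (C : Set α) :
    (delete M C).E = M.E \ C := rfl

lemma delete_indep_iff {M : Matroid α} {D I : Set α} :
    (delete M D).Indep I ↔ M.Indep I ∧ I ⊆ M.E \ D := restrict_indep_iff

lemma dual_basis_compl_iff {K : Matroid α} {X D : Set α} (hX : K.Indep X) (hXE : X ⊆ K.E) :
    K✶.IsBasis D (K.E \ X) ↔ K✶.IsBase D ∧ D ⊆ K.E \ X := by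
  obtain ⟨B₀, hB₀, hB₀X⟩ := (coindep_iff_exists (M := K✶) (X := X) (by rw [dual_ground]; exact hX.subset_ground)).1 ((dual_coindep_iff (M := K)).2 hX)
  constructor
  · intro h
    exact ⟨h.isBase_of_isBase_subset hB₀ hB₀X, h.subset⟩
  · rintro ⟨hD, hDX⟩
    refine (isBasis_iff (by exact diff_subset)).2 ⟨hD.indep, hDX, fun J hJ hDJ hJX => ?_⟩
    exact hD.eq_of_subset_indep hJ hDJ

lemma contract_indep_iff {K : Matroid α} {X I : Set α} (hX : K.Indep X) :
    (contract K X).Indep I ↔ I ⊆ K.E \ X ∧ K.Indep (I ∪ X) := by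
  have hXE : X ⊆ K.E := hX.subset_ground
  rw [contract, dual_indep_iff_exists']
  simp only [restrict_ground_eq]
  constructor
  · rintro ⟨hIE, D, hD, hID⟩
    have hD' : K✶.IsBasis D (K.E \ X) := by
      rw [isBase_restrict_iff (by exact diff_subset)] at hD
      exact hD
    rw [dual_basis_compl_iff hX hXE] at hD'
    obtain ⟨hDbase, hDX⟩ := hD'
    have hBbase : K.IsBase (K.E \ D) := hDbase.compl_isBase_of_dual
    refine ⟨hIE, hBbase.indep.subset (union_subset ?_ ?_)⟩
    · exact fun x hx => ⟨hIE hx |>.1, fun hxD => hID.ne_of_mem hx hxD rfl⟩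
    · exact fun x hx => ⟨hXE hx, fun hxD => (hDX hxD).2 hx⟩
  · rintro ⟨hIE, hIX⟩
    obtain ⟨B, hB, hIXB⟩ := hIX.exists_isBase_superset
    refine ⟨hIE, K.E \ B, ?_, ?_⟩
    · rw [isBase_restrict_iff (by exact diff_subset), dual_basis_compl_iff hX hXE]
      refine ⟨hB.compl_isBase_dual, diff_subset_diff_right (hIXB.trans' subset_union_right)⟩
    · exact disjoint_sdiff_right.mono_left (hIXB.trans' subset_union_left)


variable {r t : ℕ}

lemma injOn_f (ht : 1 ≤ t) (i : ℕ) {n : ℕ} (hn : n ≤ 2 * t) :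
    InjOn (fun k => (k + 2 * (i - 1) - 1) % (2 * t) + 1) (Set.Icc 1 n) := by
  intro a ha b hb h
  simp only at h
  simp only [mem_Icc] at ha hb
  have h' : (a + 2 * (i - 1) - 1) % (2 * t) = (b + 2 * (i - 1) - 1) % (2 * t) := by omega
  have ha' : a + 2 * (i - 1) - 1 = (a - 1) + 2 * (i - 1) := by omega
  have hb' : b + 2 * (i - 1) - 1 = (b - 1) + 2 * (i - 1) := by omega
  rw [ha', hb'] at h'
  have h'' : a - 1 ≡ b - 1 [MOD 2 * t] := Nat.ModEq.add_right_cancel' _ h'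
  have := h''.eq_of_lt_of_lt (by omega) (by omega)
  omega

lemma Ci_subset (ht : 1 ≤ t) (i : ℕ) : Ci r t i ⊆ Set.Icc 1 (2 * t) := by
  rintro x ⟨k, hk, rfl⟩
  have : (k + 2 * (i - 1) - 1) % (2 * t) < 2 * t := Nat.mod_lt _ (by omega)
  simp only [mem_Icc]
  omega

lemma ncard_image_f (ht : 1 ≤ t) (i : ℕ) {n : ℕ} (hn : n ≤ 2 * t) :
    ((fun k => (k + 2 * (i - 1) - 1) % (2 * t) + 1) '' (Set.Icc 1 n)).ncard = n := by
  rw [ncard_image_of_injOn (injOn_f ht i hn), ← Finset.coe_Icc, ncard_coe_finset,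
    Nat.card_Icc]
  omega

lemma hC1 (hr : 4 ≤ r) (hrt : r + 2 ≤ 2 * t) : Ci r t 1 = Set.Icc 1 (r - 2) := by
  ext x
  simp only [Ci, mem_image, mem_Icc]
  constructor
  · rintro ⟨k, hk, rfl⟩
    rw [Nat.mod_eq_of_lt (by omega)]
    omega
  · rintro hx
    exact ⟨x, by omega, by rw [Nat.mod_eq_of_lt (by omega)]; omega⟩

lemma hCsucc (hr : 4 ≤ r) (hrt : r + 2 ≤ 2 * t) {i : ℕ} (hi : 1 ≤ i) :
    Ci r t i ∪ Ci r t (i + 1) =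
      (fun k => (k + 2 * (i - 1) - 1) % (2 * t) + 1) '' Set.Icc 1 r := by
  have hshift : Ci r t (i + 1) =
      (fun k => (k + 2 * (i - 1) - 1) % (2 * t) + 1) '' Set.Icc 3 r := by
    ext x
    simp only [Ci, mem_image, mem_Icc]
    constructor
    · rintro ⟨k, hk, rfl⟩
      refine ⟨k + 2, by omega, ?_⟩
      show (k + 2 + 2 * (i - 1) - 1) % (2 * t) + 1 = (k + 2 * (i + 1 - 1) - 1) % (2 * t) + 1
      have harg : k + 2 + 2 * (i - 1) - 1 = k + 2 * (i + 1 - 1) - 1 := by omega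
      rw [harg]
    · rintro ⟨k, hk, rfl⟩
      refine ⟨k - 2, by omega, ?_⟩
      show (k - 2 + 2 * (i + 1 - 1) - 1) % (2 * t) + 1 = (k + 2 * (i - 1) - 1) % (2 * t) + 1
      have harg : k - 2 + 2 * (i + 1 - 1) - 1 = k + 2 * (i - 1) - 1 := by omega
      rw [harg]
  have hun : (Set.Icc 1 (r - 2) ∪ Set.Icc 3 r : Set ℕ) = Set.Icc 1 r := by
    ext x
    simp only [mem_union, mem_Icc]
    omega
  rw [Ci, hshift, ← image_union, hun]

lemma hCt (hr : 4 ≤ r) (ht : 3 ≤ t) (hrt : r + 2 ≤ 2 * t) :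
    Ci r t t = Set.Icc 1 (r - 4) ∪ {2 * t - 1, 2 * t} := by
  ext x
  simp only [Ci, mem_image, mem_Icc, mem_union, mem_insert_iff, mem_singleton_iff]
  constructor
  · rintro ⟨k, hk, rfl⟩
    rcases lt_or_ge (k + 2 * (t - 1) - 1) (2 * t) with h | h
    · rw [Nat.mod_eq_of_lt h]; omega
    · have h4 : k + 2 * (t - 1) - 1 - 2 * t < 2 * t := by omega
      have : (k + 2 * (t - 1) - 1) % (2 * t) = k + 2 * (t - 1) - 1 - 2 * t := by
        rw [Nat.mod_eq_sub_mod h, Nat.mod_eq_of_lt h4]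
      rw [this]; omega
  · rintro (hx | hx | hx)
    · refine ⟨x + 2, by omega, ?_⟩
      have : x + 2 + 2 * (t - 1) - 1 = (x - 1) + 2 * t := by omega
      rw [this, Nat.add_mod_right, Nat.mod_eq_of_lt (by omega)]
      omega
    · refine ⟨1, by omega, ?_⟩
      rw [Nat.mod_eq_of_lt (by omega)]; omega
    · refine ⟨2, by omega, ?_⟩
      rw [Nat.mod_eq_of_lt (by omega)]; omega

lemma hW (hr : 4 ≤ r) (ht : 3 ≤ t) (hrt : r + 2 ≤ 2 * t) :
    Ci r t 1 ∪ Ci r t t = Set.Icc 1 (r - 2) ∪ {2 * t - 1, 2 * t} := by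
  rw [hC1 hr hrt, hCt hr ht hrt]
  ext x
  simp only [mem_union, mem_Icc, mem_insert_iff, mem_singleton_iff]
  omega

lemma ncard_W (hr : 4 ≤ r) (ht : 3 ≤ t) (hrt : r + 2 ≤ 2 * t) :
    (Ci r t 1 ∪ Ci r t t).ncard = r := by
  rw [hW hr ht hrt]
  rw [ncard_union_eq (by
      rw [disjoint_left]
      rintro x hx hx2
      simp only [mem_Icc] at hx
      simp only [mem_insert_iff, mem_singleton_iff] at hx2
      omega)
    (by exact (Set.finite_Icc 1 (r - 2))) (by exact (Set.finite_Icc 1 (2 * t)).subset (by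
      intro x hx; simp only [mem_insert_iff, mem_singleton_iff] at hx
      simp only [mem_Icc]; omega))]
  rw [← Finset.coe_Icc, ncard_coe_finset, Nat.card_Icc]
  rw [Set.ncard_pair (show 2 * t - 1 ≠ 2 * t by omega)]
  omega

lemma ncard_U (hr : 4 ≤ r) (hrt : r + 2 ≤ 2 * t) {i : ℕ} (hi : 1 ≤ i) :
    (Ci r t i ∪ Ci r t (i + 1)).ncard = r := by
  rw [hCsucc hr hrt hi, ncard_image_f (by omega) i (by omega)]

lemma W_ne_U (hr : 4 ≤ r) (ht : 3 ≤ t) (hrt : r + 2 ≤ 2 * t) {i : ℕ} (hi : 1 ≤ i)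
    (hit : i ≤ t - 1) : Ci r t 1 ∪ Ci r t t ≠ Ci r t i ∪ Ci r t (i + 1) := by
  intro h
  rw [hW hr ht hrt, hCsucc hr hrt hi] at h
  rcases le_or_gt (2 * i) r with h2i | h2i
  · have hmem : r - 1 ∈ (fun k => (k + 2 * (i - 1) - 1) % (2 * t) + 1) '' Set.Icc 1 r := by
      refine ⟨r + 1 - 2 * i, by simp only [mem_Icc]; omega, ?_⟩
      simp only
      have harg : r + 1 - 2 * i + 2 * (i - 1) - 1 = r - 2 := by omega
      rw [harg, Nat.mod_eq_of_lt (by omega)]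
      omega
    rw [← h] at hmem
    simp only [mem_union, mem_Icc, mem_insert_iff, mem_singleton_iff] at hmem
    omega
  · have hmem : 2 * i - 1 ∈ (fun k => (k + 2 * (i - 1) - 1) % (2 * t) + 1) '' Set.Icc 1 r := by
      refine ⟨1, by simp only [mem_Icc]; omega, ?_⟩
      simp only
      have harg : 1 + 2 * (i - 1) - 1 = 2 * i - 2 := by omega
      rw [harg, Nat.mod_eq_of_lt (by omega)]
      omega
    rw [← h] at hmem
    simp only [mem_union, mem_Icc, mem_insert_iff, mem_singleton_iff] at hmem
    omega



section KFacts

variable {r t : ℕ} {K : Matroid ℕ}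

lemma hKE (hK : IsKrt r t K) : K.E = Set.Icc 1 (2 * t + 2) := hK.1

lemma KE_finite (hK : IsKrt r t K) : K.E.Finite := by
  rw [hK.1]; exact Set.finite_Icc _ _

lemma KE_ncard (hK : IsKrt r t K) : K.E.ncard = 2 * t + 2 := by
  rw [hK.1, ← Finset.coe_Icc, ncard_coe_finset, Nat.card_Icc]
  omega

lemma indep_ncard_le (hK : IsKrt r t K) {I : Set ℕ} (hI : K.Indep I) : I.ncard ≤ r := by
  have hbdd : BddAbove {n | ∃ I, K.Indep I ∧ I ⊆ K.E ∧ I.ncard = n} := by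
    refine ⟨K.E.ncard, ?_⟩
    rintro n ⟨J, hJ, hJE, rfl⟩
    exact ncard_le_ncard hJE (KE_finite hK)
  have h := le_csSup hbdd (show I.ncard ∈ _ from ⟨I, hI, hI.subset_ground, rfl⟩)
  have hrk : rank K = r := hK.2.1
  rw [rank, rk] at hrk
  omega

lemma small_indep (hK : IsKrt r t K) (ht : 3 ≤ t) (hrt : r + 2 ≤ 2 * t)
    {S : Set ℕ} (hSE : S ⊆ K.E) (hS : S.ncard < r) : K.Indep S := by
  obtain ⟨T, hST, hTE, hTcard⟩ := Set.exists_subsuperset_card_eq hSE (le_of_lt hS)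
    (by rw [KE_ncard hK]; omega)
  rcases hK.2.2.1 T hTE hTcard with hbase | hch
  · exact hbase.indep.subset hST
  · refine hch.1.2 S (ssubset_of_subset_of_ne hST fun h => ?_)
    rw [h] at hS; omega

lemma base_of_not_ch (hK : IsKrt r t K) {S : Set ℕ} (hSE : S ⊆ K.E) (hS : S.ncard = r)
    (hnot : S ∉ CC' r t ∪ CC'' r t) : K.IsBase S := by
  rcases hK.2.2.1 S hSE hS with hbase | hch
  · exact hbase
  · exact absurd ((hK.2.2.2 S).1 hch) hnot

lemma circuit_of_ch (hK : IsKrt r t K) {S : Set ℕ} (hS : S ∈ CC' r t ∪ CC'' r t) :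
    Circuit K S := ((hK.2.2.2 S).2 hS).1

lemma notCH (ht : 3 ≤ t) {S : Set ℕ} (h1 : 2 * t + 1 ∈ S) (h2 : 2 * t + 2 ∉ S) :
    S ∉ CC' r t ∪ CC'' r t := by
  rintro (⟨j, hj, rfl⟩ | ⟨j, hj, rfl⟩)
  · exact h2 (Or.inr (Or.inr rfl))
  · rcases h1 with h1 | h1
    · have := Ci_subset (r := r) (by omega) j h1
      simp only [mem_Icc] at this; omega
    · have := Ci_subset (r := r) (by omega) (j + 1) h1
      simp only [mem_Icc] at this; omega

lemma hXE (hK : IsKrt r t K) (ht : 3 ≤ t) : ({2 * t + 1, 2 * t + 2} : Set ℕ) ⊆ K.E := by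
  rw [hK.1]
  rintro x (rfl | rfl) <;> simp only [mem_Icc] <;> omega

lemma hXcard (ht : 3 ≤ t) : ({2 * t + 1, 2 * t + 2} : Set ℕ).ncard = 2 :=
  ncard_pair (by omega)

lemma hXindep (hK : IsKrt r t K) (hr : 4 ≤ r) (ht : 3 ≤ t) (hrt : r + 2 ≤ 2 * t) :
    K.Indep {2 * t + 1, 2 * t + 2} :=
  small_indep hK ht hrt (hXE hK ht) (by rw [hXcard ht]; omega)

lemma disj_X {A : Set ℕ} (hA : A ⊆ Set.Icc 1 (2 * t)) :
    Disjoint A ({2 * t + 1, 2 * t + 2} : Set ℕ) := by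
  rw [disjoint_left]
  rintro x hx (rfl | rfl) <;> (have := hA hx; simp only [mem_Icc] at this; omega)

lemma subset_E_of_subset_Icc (hK : IsKrt r t K) {A : Set ℕ} (hA : A ⊆ Set.Icc 1 (2 * t)) :
    A ⊆ K.E := by
  rw [hK.1]
  intro x hx
  have := hA hx
  simp only [mem_Icc] at this ⊢
  omega

lemma circuitM (hK : IsKrt r t K) (hr : 4 ≤ r) (ht : 3 ≤ t) (hrt : r + 2 ≤ 2 * t)
    {j : ℕ} (h1 : 1 ≤ j) (h2 : j ≤ t) :
    Circuit (contract K {2 * t + 1, 2 * t + 2}) (Ci r t j) := by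
  set X : Set ℕ := {2 * t + 1, 2 * t + 2} with hXdef
  have hmem : Ci r t j ∪ X ∈ CC' r t := ⟨j, by simp only [mem_Icc]; omega, rfl⟩
  have hcirc : Circuit K (Ci r t j ∪ X) := circuit_of_ch hK (Or.inl hmem)
  have hCsub : Ci r t j ⊆ Set.Icc 1 (2 * t) := Ci_subset (by omega) j
  have hCE : Ci r t j ⊆ K.E \ X :=
    subset_diff.2 ⟨subset_E_of_subset_Icc hK hCsub, disj_X hCsub⟩
  have hXi : K.Indep X := hXindep hK hr ht hrt
  constructor
  · refine ⟨fun hind => ?_, hCE⟩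
    rw [contract_indep_iff hXi] at hind
    exact hcirc.1.not_indep hind.2
  · intro D hD
    rw [contract_indep_iff hXi]
    refine ⟨hD.subset.trans hCE, ?_⟩
    refine hcirc.2 (D ∪ X) ?_
    obtain ⟨x, hxC, hxD⟩ := exists_of_ssubset hD
    rw [ssubset_iff_subset_ne]
    refine ⟨union_subset_union_left X hD.subset, fun h => ?_⟩
    have hxX : x ∉ X := fun hx => by
      have := hCsub hxC; rcases hx with rfl | rfl <;> (simp only [mem_Icc] at this; omega)
    have : x ∈ D ∪ X := h ▸ Or.inl hxC
    rcases this with h' | h'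
    · exact hxD h'
    · exact hxX h'

lemma rkM_eq (hK : IsKrt r t K) (hr : 4 ≤ r) (ht : 3 ≤ t) (hrt : r + 2 ≤ 2 * t)
    {A : Set ℕ} (hA : A ⊆ Set.Icc 1 (2 * t))
    (hB : ∃ B, K.IsBase B ∧ B ⊆ A ∪ {2 * t + 1, 2 * t + 2} ∧ B.ncard = r) :
    rk (contract K {2 * t + 1, 2 * t + 2}) A = r - 2 := by
  set X : Set ℕ := {2 * t + 1, 2 * t + 2} with hXdef
  obtain ⟨B, hBbase, hBsub, hBcard⟩ := hB
  have hXi : K.Indep X := hXindep hK hr ht hrt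
  have hAE : A ⊆ K.E := subset_E_of_subset_Icc hK hA
  have hAXE : A ∪ X ⊆ K.E := union_subset hAE (hXE hK ht)
  have hXfin : X.Finite := by rw [hXdef]; exact Set.toFinite _
  have hXn : X.ncard = 2 := by rw [hXdef]; exact hXcard ht
  obtain ⟨J, hJ, hXJ⟩ := hXi.subset_isBasis_of_subset subset_union_right hAXE
  have hBbasis : K.IsBasis B (A ∪ X) := by
    rw [isBasis_iff hAXE]
    exact ⟨hBbase.indep, hBsub, fun J' hJ' hBJ' _ => hBbase.eq_of_subset_indep hJ' hBJ'⟩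
  have hJcard : J.ncard = r := by
    rw [ncard_def, hJ.encard_eq_encard hBbasis, ← ncard_def, hBcard]
  apply rk_eq
  · refine ⟨J \ X, ?_, ?_, ?_⟩
    · rw [contract_indep_iff hXi]
      have hJE : J ⊆ K.E := hJ.indep.subset_ground
      refine ⟨diff_subset_diff_left hJE, ?_⟩
      rw [diff_union_self, union_eq_self_of_subset_right hXJ]
      exact hJ.indep
    · intro x hx
      rcases hJ.subset hx.1 with h | h
      · exact h
      · exact absurd h hx.2
    · rw [ncard_diff hXJ hXfin, hJcard, hXn]
  · intro I hI hIA
    rw [contract_indep_iff hXi] at hI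
    obtain ⟨hIE, hIX⟩ := hI
    have hIfin : I.Finite := (KE_finite hK).subset (fun x hx => (hIE hx).1)
    have hdisj : Disjoint I X := disj_X (hIA.trans hA)
    have := indep_ncard_le hK hIX
    rw [ncard_union_eq hdisj hIfin hXfin, hXn] at this
    omega

lemma base_construct (hK : IsKrt r t K) (hr : 4 ≤ r) (ht : 3 ≤ t) (hrt : r + 2 ≤ 2 * t)
    {A : Set ℕ} (hA : A ⊆ Set.Icc 1 (2 * t)) (hAcard : A.ncard = r) {a : ℕ} (ha : a ∈ A) :
    ∃ B, K.IsBase B ∧ B ⊆ A ∪ {2 * t + 1, 2 * t + 2} ∧ B.ncard = r := by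
  have hAfin : A.Finite := (Set.finite_Icc 1 (2 * t)).subset hA
  have hnot : 2 * t + 1 ∉ A \ {a} := fun h => by
    have := hA h.1; simp only [mem_Icc] at this; omega
  refine ⟨insert (2 * t + 1) (A \ {a}), ?_, ?_, ?_⟩
  · apply base_of_not_ch hK
    · rw [hK.1]
      rintro x (rfl | hx)
      · simp only [mem_Icc]; omega
      · have := hA hx.1; simp only [mem_Icc] at this ⊢; omega
    · rw [ncard_insert_of_notMem hnot (hAfin.diff),
        ncard_diff_singleton_of_mem ha, hAcard]
      omega
    · apply notCH ht (Or.inl rfl)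
      rintro (h | h)
      · omega
      · have := hA h.1; simp only [mem_Icc] at this; omega
  · rintro x (rfl | hx)
    · exact Or.inr (Or.inl rfl)
    · exact Or.inl hx.1
  · rw [ncard_insert_of_notMem hnot (hAfin.diff),
      ncard_diff_singleton_of_mem ha, hAcard]
    omega

lemma rkL_circuit (hK : IsKrt r t K) (hr : 4 ≤ r) (ht : 3 ≤ t) (hrt : r + 2 ≤ 2 * t)
    {U : Set ℕ} (hUsub : U ⊆ Set.Icc 1 (2 * t)) (hUcard : U.ncard = r)
    (hUcirc : Circuit K U) :
    rk (delete K {2 * t + 1, 2 * t + 2}) U = r - 1 := by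
  have hUfin : U.Finite := (Set.finite_Icc 1 (2 * t)).subset hUsub
  have hUE : U ⊆ K.E \ {2 * t + 1, 2 * t + 2} :=
    subset_diff.2 ⟨subset_E_of_subset_Icc hK hUsub, disj_X hUsub⟩
  obtain ⟨a, ha⟩ : U.Nonempty := nonempty_of_ncard_ne_zero (by omega)
  apply rk_eq
  · refine ⟨U \ {a}, ?_, diff_subset, ?_⟩
    · rw [delete_indep_iff]
      exact ⟨hUcirc.2 _ (Set.sdiff_singleton_ssubset.2 ha), diff_subset.trans hUE⟩
    · rw [ncard_diff_singleton_of_mem ha, hUcard]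
  · intro I hI hIU
    rw [delete_indep_iff] at hI
    by_contra hcon
    have hle : I.ncard ≤ r := indep_ncard_le hK hI.1
    have hIr : U.ncard ≤ I.ncard := by omega
    have := Set.eq_of_subset_of_ncard_le hIU hIr hUfin
    subst this
    exact hUcirc.1.not_indep hI.1

end KFacts


/-- The rank facts `(a)`–`(d)` about `M = K(r,t)/X` and `L = K(r,t) ∖ X`. -/
theorem stmt10 (r t : ℕ) (hr : 4 ≤ r) (ht : 3 ≤ t) (hrt : r + 2 ≤ 2 * t)
    (K : Matroid ℕ) (hK : IsKrt r t K) (M L : Matroid ℕ)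
    (hM : M = contract K {2 * t + 1, 2 * t + 2})
    (hL : L = delete K {2 * t + 1, 2 * t + 2}) :
    (∀ i, 1 ≤ i → i < t →
      Circuit M (Ci r t i) ∧ Circuit M (Ci r t (i + 1)) ∧
        (Ci r t i ∪ Ci r t (i + 1)).ncard = rk M (Ci r t i ∪ Ci r t (i + 1)) + 2) ∧
    (Circuit M (Ci r t 1) ∧ Circuit M (Ci r t t) ∧
      (Ci r t 1 ∪ Ci r t t).ncard = rk M (Ci r t 1 ∪ Ci r t t) + 2) ∧
    (∀ i, 1 ≤ i → i < t →
      rk L (Ci r t i ∪ Ci r t (i + 1)) = rk M (Ci r t i ∪ Ci r t (i + 1)) + 1) ∧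
    rk L (Ci r t 1 ∪ Ci r t t) = rk M (Ci r t 1 ∪ Ci r t t) + 2 := by
  subst hM hL
  have hUmem : ∀ i : ℕ, 1 ≤ i → i < t →
      (Ci r t i ∪ Ci r t (i + 1)) ∈ CC'' r t := fun i h1 h2 =>
    ⟨i, by simp only [mem_Icc]; omega, rfl⟩
  have hUsub : ∀ i : ℕ, 1 ≤ i → Ci r t i ∪ Ci r t (i + 1) ⊆ Set.Icc 1 (2 * t) :=
    fun i h1 => union_subset (Ci_subset (by omega) i) (Ci_subset (by omega) (i + 1))
  have hWsub : Ci r t 1 ∪ Ci r t t ⊆ Set.Icc 1 (2 * t) :=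
    union_subset (Ci_subset (by omega) 1) (Ci_subset (by omega) t)
  have hWbase : K.IsBase (Ci r t 1 ∪ Ci r t t) := by
    apply base_of_not_ch hK (subset_E_of_subset_Icc hK hWsub) (ncard_W hr ht hrt)
    rintro (⟨j, hj, hEq⟩ | ⟨j, hj, hEq⟩)
    · have hmem : 2 * t + 2 ∈ Ci r t j ∪ {2 * t + 1, 2 * t + 2} := Or.inr (Or.inr rfl)
      rw [show Ci r t j ∪ {2 * t + 1, 2 * t + 2} = (fun i => Ci r t i ∪ {2 * t + 1, 2 * t + 2}) j
        from rfl, hEq] at hmem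
      have := hWsub hmem; simp only [mem_Icc] at this; omega
    · simp only [mem_Icc] at hj
      exact W_ne_U hr ht hrt hj.1 hj.2 hEq.symm
  have hrkM_U : ∀ i : ℕ, 1 ≤ i → i < t →
      rk (contract K {2 * t + 1, 2 * t + 2}) (Ci r t i ∪ Ci r t (i + 1)) = r - 2 := by
    intro i h1 hlt
    apply rkM_eq hK hr ht hrt (hUsub i h1)
    obtain ⟨a, ha⟩ : (Ci r t i ∪ Ci r t (i + 1)).Nonempty :=
      nonempty_of_ncard_ne_zero (by rw [ncard_U hr hrt h1]; omega)
    exact base_construct hK hr ht hrt (hUsub i h1) (ncard_U hr hrt h1) ha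
  have hrkM_W : rk (contract K {2 * t + 1, 2 * t + 2}) (Ci r t 1 ∪ Ci r t t) = r - 2 := by
    apply rkM_eq hK hr ht hrt hWsub
    exact ⟨_, hWbase, subset_union_left, ncard_W hr ht hrt⟩
  refine ⟨?_, ?_, ?_, ?_⟩
  · intro i h1 hlt
    refine ⟨circuitM hK hr ht hrt h1 (by omega),
      circuitM hK hr ht hrt (by omega) (by omega), ?_⟩
    rw [ncard_U hr hrt h1, hrkM_U i h1 hlt]; omega
  · refine ⟨circuitM hK hr ht hrt le_rfl (by omega),
      circuitM hK hr ht hrt (by omega) le_rfl, ?_⟩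
    rw [ncard_W hr ht hrt, hrkM_W]; omega
  · intro i h1 hlt
    rw [rkL_circuit hK hr ht hrt (hUsub i h1) (ncard_U hr hrt h1)
      (circuit_of_ch hK (Or.inr (hUmem i h1 hlt))), hrkM_U i h1 hlt]
    omega
  · have hL : rk (delete K {2 * t + 1, 2 * t + 2}) (Ci r t 1 ∪ Ci r t t) = r := by
      apply rk_eq
      · refine ⟨_, ?_, subset_rfl, ncard_W hr ht hrt⟩
        rw [delete_indep_iff]
        exact ⟨hWbase.indep, subset_diff.2 ⟨subset_E_of_subset_Icc hK hWsub, disj_X hWsub⟩⟩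
      · intro I hI _
        rw [delete_indep_iff] at hI
        exact indep_ncard_le hK hI.1
    rw [hL, hrkM_W]; omega

end PaperLift
end

section
/- Let r ≥ 4 and t ≥ 3 be integers with r ≤ 2t−3, let h ≥ 1, and let i₁ < i₂ < … < i_h be distinct indices in [t]. If the intersection C_{i₁} ∩ C_{i₂} ∩ … ∩ C_{i_h} is nonempty, then |C_{i₁} ∩ C_{i₂} ∩ … ∩ C_{i_h}| ≤ r − 2h. -/
open Set Matroid
open scoped Matroid

namespace PaperLift

variable {α : Type} {β : Type}

private lemma lemA (n m0 a : ℕ) (ha : a ≤ n) (hm0 : m0 < n) :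
    ((m0 + a) % n + (n - a)) % n = m0 := by
  rw [Nat.mod_add_mod, show m0 + a + (n - a) = m0 + n by omega,
    Nat.add_mod_right, Nat.mod_eq_of_lt hm0]

private lemma lemB (n m a m0 : ℕ) (hm : m < n) :
    ((m + a) % n + (n - (m0 + a) % n) + m0) % n = m := by
  have hn : 0 < n := lt_of_le_of_lt (Nat.zero_le m) hm
  have hd := Nat.div_add_mod (m0 + a) n
  have hcn : (m0 + a) % n < n := Nat.mod_lt _ hn
  rw [add_assoc, Nat.mod_add_mod,
    show m + a + ((n - (m0 + a) % n) + m0) = m + n * ((m0 + a) / n + 1) by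
      have : n * ((m0 + a) / n + 1) = n * ((m0 + a) / n) + n := by ring
      omega,
    Nat.add_mul_mod_self_left, Nat.mod_eq_of_lt hm]

private lemma mod_mod_two (t A : ℕ) : A % (2 * t) % 2 = A % 2 := by
  have hd := Nat.div_add_mod A (2 * t)
  have h2 : 2 * t * (A / (2 * t)) = 2 * (t * (A / (2 * t))) := by ring
  omega

set_option maxHeartbeats 1000000 in
/-- If the intersection of `h` distinct sets `C_i` is nonempty, then it has at most `r - 2h`
elements. -/
theorem stmt11 (r t : ℕ) (hr : 4 ≤ r) (ht : 3 ≤ t) (hrt : r + 3 ≤ 2 * t)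
    (s : Finset ℕ) (hs : ↑s ⊆ Set.Icc 1 t) (hne : s.Nonempty)
    (hint : (⋂ i ∈ (s : Set ℕ), Ci r t i).Nonempty) :
    (⋂ i ∈ (s : Set ℕ), Ci r t i).ncard + 2 * s.card ≤ r := by
  set n := 2 * t with hn
  set L := r - 2 with hL
  have hn0 : 0 < n := by omega
  have hLn : L + 5 ≤ n := by omega
  have hL2 : 2 ≤ L := by omega
  set X := ⋂ i ∈ (s : Set ℕ), Ci r t i with hX
  have memCi : ∀ i x, x ∈ Ci r t i ↔ ∃ m, m ≤ L - 1 ∧ x = (m + 2 * (i - 1)) % n + 1 := by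
    intro i x
    constructor
    · rintro ⟨k, hk, rfl⟩
      simp only [Set.mem_Icc] at hk
      refine ⟨k - 1, by omega, ?_⟩
      show (k + 2 * (i - 1) - 1) % (2 * t) + 1 = _
      rw [show k + 2*(i-1) - 1 = (k-1) + 2*(i-1) by omega]
    · rintro ⟨m, hm, rfl⟩
      refine ⟨m + 1, by simp only [Set.mem_Icc]; omega, ?_⟩
      show (m + 1 + 2 * (i - 1) - 1) % (2 * t) + 1 = _
      rw [show m + 1 + 2*(i-1) - 1 = m + 2*(i-1) by omega]
  obtain ⟨x0, hx0⟩ := hint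
  have hx0mem : ∀ i ∈ s, x0 ∈ Ci r t i := fun i hi => Set.mem_iInter₂.mp hx0 i hi
  have hbound : ∀ i ∈ s, 2 * (i - 1) + 2 ≤ n := by
    intro i hi
    have := hs hi
    simp only [Set.mem_Icc] at this
    omega
  set D : ℕ → ℕ := fun i => (x0 - 1 + (n - 2 * (i - 1))) % n with hD
  set ψ : ℕ → ℕ := fun x => (x - 1 + (n - (x0 - 1))) % n with hψ
  have hDval : ∀ i ∈ s, D i ≤ L - 1 ∧ x0 - 1 = (D i + 2 * (i - 1)) % n := by
    intro i hi
    obtain ⟨m0, hm0, hx0eq⟩ := (memCi i x0).mp (hx0mem i hi)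
    have hx0' : x0 - 1 = (m0 + 2 * (i - 1)) % n := by omega
    have hDi : D i = m0 := by
      show (x0 - 1 + (n - 2 * (i - 1))) % n = m0
      rw [hx0']
      exact lemA n m0 (2 * (i - 1)) (by have := hbound i hi; omega) (by omega)
    rw [hDi]
    exact ⟨hm0, hx0'⟩
  have hDlt : ∀ i, D i < n := fun i => Nat.mod_lt _ hn0
  have hψlt : ∀ x, ψ x < n := fun x => Nat.mod_lt _ hn0
  have hKey : ∀ x ∈ X, ∀ i ∈ s, ∃ m ≤ L - 1, (ψ x + D i) % n = m := by
    intro x hx i hi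
    obtain ⟨m, hm, hxeq⟩ := (memCi i x).mp (Set.mem_iInter₂.mp hx i hi)
    refine ⟨m, hm, ?_⟩
    have hx' : x - 1 = (m + 2 * (i - 1)) % n := by omega
    have hx0' := (hDval i hi).2
    show ((x - 1 + (n - (x0 - 1))) % n + D i) % n = m
    rw [Nat.mod_add_mod, hx', hx0']
    exact lemB n m (2 * (i - 1)) (D i) (by omega)
  -- intervals
  set U : Finset ℕ := s.biUnion (fun i => Finset.Ico (L - D i) (n - D i)) with hU
  have hUsub : U ⊆ Finset.range n := by
    intro x hx
    simp only [hU, Finset.mem_biUnion, Finset.mem_Ico] at hx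
    obtain ⟨i, hi, h1, h2⟩ := hx
    simp only [Finset.mem_range]
    omega
  have hmaps : ∀ x ∈ X, ψ x ∈ ((Finset.range n \ U : Finset ℕ) : Set ℕ) := by
    intro x hx
    simp only [Finset.coe_sdiff, Set.mem_diff, Finset.coe_range, Set.mem_Iio,
      Finset.mem_coe]
    refine ⟨hψlt x, ?_⟩
    intro hmem
    simp only [hU, Finset.mem_biUnion, Finset.mem_Ico] at hmem
    obtain ⟨i, hi, h1, h2⟩ := hmem
    obtain ⟨m, hm, hmeq⟩ := hKey x hx i hi
    have hDle := (hDval i hi).1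
    have hDn := hDlt i
    have hlt : ψ x + D i < n := by omega
    rw [Nat.mod_eq_of_lt hlt] at hmeq
    omega
  have hXsub : X ⊆ Set.Icc 1 n := by
    obtain ⟨i1, hi1⟩ := hne
    intro x hx
    obtain ⟨m, hm, hxeq⟩ := (memCi i1 x).mp (Set.mem_iInter₂.mp hx i1 hi1)
    have : (m + 2 * (i1 - 1)) % n < n := Nat.mod_lt _ hn0
    simp only [Set.mem_Icc]
    omega
  have hinj : Set.InjOn ψ X := by
    intro x hxm y hym hxy
    have hx1 := hXsub hxm
    have hy1 := hXsub hym
    simp only [Set.mem_Icc] at hx1 hy1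
    have heq : x - 1 + (n - (x0 - 1)) ≡ y - 1 + (n - (x0 - 1)) [MOD n] := hxy
    have := Nat.ModEq.add_right_cancel' _ heq
    have hxe : (x - 1) % n = (y - 1) % n := this
    rw [Nat.mod_eq_of_lt (by omega), Nat.mod_eq_of_lt (by omega)] at hxe
    omega
  have hXfin : X.Finite := by
    obtain ⟨i1, hi1⟩ := hne
    have h1 : X ⊆ Ci r t i1 := Set.biInter_subset_of_mem (by exact hi1)
    exact Set.Finite.subset ((Set.finite_Icc 1 (r-2)).image _) h1
  have hcard1 : X.ncard ≤ (Finset.range n \ U).card := by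
    have h := Set.ncard_le_ncard_of_injOn ψ hmaps hinj (Finset.range n \ U).finite_toSet
    rwa [Set.ncard_coe_finset] at h
  have hSU : (Finset.range n \ U).card = n - U.card := by
    rw [Finset.card_sdiff_of_subset hUsub, Finset.card_range]
  have hXpos : 1 ≤ X.ncard := (Set.ncard_pos hXfin).mpr ⟨x0, hx0⟩
  -- injectivity and parity of D on s
  have hDinj : ∀ i ∈ s, ∀ j ∈ s, D i = D j → i = j := by
    intro i hi j hj hij
    have hbi := hbound i hi
    have hbj := hbound j hj
    have hsi := hs hi; have hsj := hs hj
    simp only [Set.mem_Icc] at hsi hsj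
    have heq : x0 - 1 + (n - 2 * (i - 1)) ≡ x0 - 1 + (n - 2 * (j - 1)) [MOD n] := hij
    have h2 := heq.add_right (2 * (i - 1) + 2 * (j - 1))
    have e1 : x0 - 1 + (n - 2 * (i - 1)) + (2 * (i - 1) + 2 * (j - 1))
        = (x0 - 1 + n) + 2 * (j - 1) := by omega
    have e2 : x0 - 1 + (n - 2 * (j - 1)) + (2 * (i - 1) + 2 * (j - 1))
        = (x0 - 1 + n) + 2 * (i - 1) := by omega
    rw [e1, e2] at h2
    have h3 : 2 * (j - 1) ≡ 2 * (i - 1) [MOD n] := Nat.ModEq.add_left_cancel' _ h2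
    have h4 : 2 * (j - 1) % n = 2 * (i - 1) % n := h3
    rw [Nat.mod_eq_of_lt (by omega), Nat.mod_eq_of_lt (by omega)] at h4
    omega
  have hDpar : ∀ i ∈ s, D i % 2 = (x0 - 1) % 2 := by
    intro i hi
    have hbi := hbound i hi
    have h1 : D i % 2 = (x0 - 1 + (n - 2 * (i - 1))) % (2 * t) % 2 := by rw [← hn]
    rw [h1, mod_mod_two]
    omega
  -- lower bound on U.card
  obtain ⟨i0, hi0s, hi0min⟩ := s.exists_min_image D hne
  set V : Finset ℕ := Finset.Ico (L - D i0) (n - D i0) ∪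
    (s.erase i0).biUnion (fun i => ({L - D i, L - D i + 1} : Finset ℕ)) with hV
  have hVU : V ⊆ U := by
    apply Finset.union_subset
    · rw [hU]; exact Finset.subset_biUnion_of_mem (fun i => Finset.Ico (L - D i) (n - D i)) hi0s
    · apply Finset.biUnion_subset.mpr
      intro i hi
      have his := Finset.mem_of_mem_erase hi
      have hDle := (hDval i his).1
      intro x hx
      simp only [Finset.mem_insert, Finset.mem_singleton] at hx
      rw [hU]
      refine Finset.mem_biUnion.mpr ⟨i, his, ?_⟩
      simp only [Finset.mem_Ico]
      omega
  have hpairdisj : ∀ i ∈ s.erase i0, ∀ j ∈ s.erase i0, i ≠ j →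
      Disjoint ({L - D i, L - D i + 1} : Finset ℕ) {L - D j, L - D j + 1} := by
    intro i hi j hj hij
    have his := Finset.mem_of_mem_erase hi
    have hjs := Finset.mem_of_mem_erase hj
    have hDij : D i ≠ D j := fun h => hij (hDinj i his j hjs h)
    have hpi := hDpar i his; have hpj := hDpar j hjs
    have h1 := (hDval i his).1; have h2 := (hDval j hjs).1
    rw [Finset.disjoint_left]
    intro x hx hx'
    simp only [Finset.mem_insert, Finset.mem_singleton] at hx hx'
    omega
  have hbucard : ((s.erase i0).biUnion
      (fun i => ({L - D i, L - D i + 1} : Finset ℕ))).card = 2 * (s.card - 1) := by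
    rw [Finset.card_biUnion hpairdisj]
    rw [Finset.sum_congr rfl (fun i _ => (by
      rw [Finset.card_insert_of_notMem (by simp), Finset.card_singleton] :
        ({L - D i, L - D i + 1} : Finset ℕ).card = 2))]
    rw [Finset.sum_const, Finset.card_erase_of_mem hi0s, smul_eq_mul, mul_comm]
  have hmaindisj : Disjoint (Finset.Ico (L - D i0) (n - D i0))
      ((s.erase i0).biUnion (fun i => ({L - D i, L - D i + 1} : Finset ℕ))) := by
    rw [Finset.disjoint_left]
    intro x hx hx'
    simp only [Finset.mem_Ico] at hx
    simp only [Finset.mem_biUnion, Finset.mem_insert, Finset.mem_singleton] at hx'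
    obtain ⟨i, hi, hxi⟩ := hx'
    have his := Finset.mem_of_mem_erase hi
    have hii0 : i ≠ i0 := Finset.ne_of_mem_erase hi
    have hDgt : D i0 < D i := by
      rcases Nat.lt_or_ge (D i0) (D i) with h | h
      · exact h
      · have : D i = D i0 := le_antisymm (by omega) (hi0min i his)
        exact absurd (hDinj i his i0 hi0s this) hii0
    have hpi := hDpar i his; have hpi0 := hDpar i0 hi0s
    have h1 := (hDval i his).1; have h0 := (hDval i0 hi0s).1
    omega
  have hVcard : V.card = (n - L) + 2 * (s.card - 1) := by
    rw [hV, Finset.card_union_of_disjoint hmaindisj, hbucard, Nat.card_Ico]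
    have h0 := (hDval i0 hi0s).1
    omega
  have hUcard : (n - L) + 2 * (s.card - 1) ≤ U.card := by
    rw [← hVcard]; exact Finset.card_le_card hVU
  have hUn : U.card ≤ n := by
    have := Finset.card_le_card hUsub
    simpa using this
  have hscard : 1 ≤ s.card := Finset.card_pos.mpr hne
  omega


end PaperLift
end

section
/- Let M be a matroid and let 𝒞' be a finite collection of circuits of M. Then 𝒞' is perfect if and only if there exists a basis B of M such that every C ∈ 𝒞' is a fundamental circuit with respect to B, i.e., for every C ∈ 𝒞' there is an element e ∉ B such that C is the unique circuit of M contained in B ∪ {e}. -/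
open Set Matroid
open scoped Matroid

namespace PaperLift

variable {α : Type} {β : Type}

lemma rk_eq_ncard_of_basis {M : Matroid α} (hM : M.E.Finite) {I X : Set α}
    (hI : M.IsBasis I X) : rk M X = I.ncard := by
  have hne : {n | ∃ I, M.Indep I ∧ I ⊆ X ∧ I.ncard = n}.Nonempty :=
    ⟨0, ∅, M.empty_indep, empty_subset _, by simp⟩
  apply le_antisymm
  · apply csSup_le hne
    rintro n ⟨J, hJ, hJX, rfl⟩
    obtain ⟨J', hJ', hJJ'⟩ := hJ.subset_isBasis_of_subset hJX hI.subset_ground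
    have hc : I.encard = J'.encard := hI.encard_eq_encard hJ'
    calc J.ncard ≤ J'.ncard := ncard_le_ncard hJJ' (hM.subset hJ'.indep.subset_ground)
      _ = I.ncard := by rw [ncard_def, ncard_def, hc]
  · exact le_csSup ⟨M.E.ncard, fun n ⟨J, hJ, _, h⟩ =>
      h ▸ ncard_le_ncard hJ.subset_ground hM⟩ ⟨I, hI.indep, hI.subset, rfl⟩

lemma circuit_mem_closure_diff {M : Matroid α} {C : Set α} (hC : Circuit M C) {e : α}
    (he : e ∈ C) : e ∈ M.closure (C \ {e}) := by
  have hI : M.Indep (C \ {e}) := hC.2 _ ⟨diff_subset, fun h => (h he).2 rfl⟩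
  rw [hI.mem_closure_iff]
  left
  rw [insert_diff_singleton, insert_eq_of_mem he]
  exact hC.1

lemma fund_subset {M : Matroid α} {B : Set α} (hB : M.IsBase B) {e : α}
    {C₁ C₂ : Set α} (h1 : Circuit M C₁) (h2 : Circuit M C₂) (hs1 : C₁ ⊆ insert e B)
    (hs2 : C₂ ⊆ insert e B) : C₁ ⊆ C₂ := by
  intro x hx
  by_contra hxC₂
  have heC₂ : e ∈ C₂ := by
    by_contra he
    exact h2.1.not_indep (hB.indep.subset fun y hy =>
      ((hs2 hy).resolve_left (fun h => he (h ▸ hy))))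
  have hxe : x ≠ e := fun h => hxC₂ (h ▸ heC₂)
  have hxB : x ∈ B := (hs1 hx).resolve_left hxe
  have hecl : e ∈ M.closure (B \ {x}) := by
    refine M.closure_subset_closure ?_ (circuit_mem_closure_diff h2 heC₂)
    rintro y ⟨hy, hye⟩
    exact ⟨(hs2 hy).resolve_left hye, fun h => hxC₂ (h ▸ hy)⟩
  have hxcl : x ∈ M.closure (B \ {x}) := by
    have h1' : x ∈ M.closure (C₁ \ {x}) := circuit_mem_closure_diff h1 hx
    have hsub : C₁ \ {x} ⊆ insert e (B \ {x}) := by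
      rintro y ⟨hy, hyx⟩
      rcases hs1 hy with h | h
      · exact Or.inl h
      · exact Or.inr ⟨h, hyx⟩
    have := M.closure_subset_closure hsub h1'
    rwa [closure_insert_eq_of_mem_closure hecl] at this
  exact hB.indep.notMem_closure_diff_of_mem hxB hxcl

lemma fund_unique {M : Matroid α} {B : Set α} (hB : M.IsBase B) {e : α}
    {C₁ C₂ : Set α} (h1 : Circuit M C₁) (h2 : Circuit M C₂) (hs1 : C₁ ⊆ insert e B)
    (hs2 : C₂ ⊆ insert e B) : C₁ = C₂ :=
  (fund_subset hB h1 h2 hs1 hs2).antisymm (fund_subset hB h2 h1 hs2 hs1)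


/-- A finite collection of circuits is perfect if and only if it is contained in the set of
fundamental circuits with respect to some base. -/
theorem stmt13 {α : Type} (M : Matroid α) (hM : M.E.Finite)
    (Cs : Set (Set α)) (hfin : Cs.Finite) (hcirc : ∀ C ∈ Cs, Circuit M C) :
    Perfect M Cs ↔
      ∃ B, M.IsBase B ∧ ∀ C ∈ Cs, ∃ e, e ∉ B ∧ C ⊆ insert e B ∧
        ∀ C', Circuit M C' → C' ⊆ insert e B → C' = C := by
  rcases Cs.eq_empty_or_nonempty with rfl | ⟨C₀, hC₀⟩
  · have hrk0 : rk M ∅ = 0 := by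
      have hbe : M.IsBasis ∅ ∅ :=
        M.empty_indep.isBasis_of_subset_of_subset_closure (subset_refl _) (empty_subset _)
      simpa using rk_eq_ncard_of_basis hM hbe
    constructor
    · rintro -
      obtain ⟨B, hB⟩ := M.exists_isBase
      exact ⟨B, hB, by simp⟩
    · rintro -
      exact ⟨finite_empty, by simp, by simp [hrk0], by simp⟩
  · have hC₀ne : C₀.Nonempty := by
      rcases C₀.eq_empty_or_nonempty with h0 | h
      · exact absurd (h0 ▸ M.empty_indep) (hcirc _ hC₀).1.not_indep
      · exact h
    haveI : Nonempty α := ⟨hC₀ne.some⟩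
    constructor
    · rintro ⟨-, -, hcard, hmin⟩
      set U := ⋃₀ Cs with hU
      have hUE : U ⊆ M.E := sUnion_subset fun C hC => (hcirc C hC).1.subset_ground
      have hUfin : U.Finite := hM.subset hUE
      have hx : ∀ C ∈ Cs, ∃ a, a ∈ C ∧ a ∉ ⋃₀ (Cs \ {C}) := by
        intro C hC
        simpa [not_subset] using hmin C hC
      choose! x hx1 hx2 using hx
      have hinj : InjOn x Cs := by
        intro C hC C' hC' hxx
        by_contra hne
        exact hx2 C' hC' ⟨C, ⟨hC, hne⟩, hxx ▸ hx1 C hC⟩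
      set T := x '' Cs with hT
      have hTU : T ⊆ U := by rintro _ ⟨C, hC, rfl⟩; exact ⟨C, hC, hx1 C hC⟩
      set X := U \ T with hX
      have hXE : X ⊆ M.E := diff_subset.trans hUE
      have hdiff : ∀ C ∈ Cs, C \ {x C} ⊆ X := by
        rintro C hC y ⟨hyC, hyx⟩
        refine ⟨⟨C, hC, hyC⟩, ?_⟩
        rintro ⟨C', hC', rfl⟩
        rcases eq_or_ne C' C with rfl | hne
        · exact hyx rfl
        · exact hx2 C' hC' ⟨C, ⟨hC, fun h => hne h.symm⟩, hyC⟩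
      have hUcl : U ⊆ M.closure X := by
        rintro u ⟨C, hC, huC⟩
        rcases eq_or_ne u (x C) with rfl | hne
        · exact M.closure_subset_closure (hdiff C hC) (circuit_mem_closure_diff (hcirc C hC) (by exact huC))
        · refine M.subset_closure X hXE ⟨⟨C, hC, huC⟩, ?_⟩
          rintro ⟨C', hC', rfl⟩
          rcases eq_or_ne C' C with rfl | hne'
          · exact hne rfl
          · exact hx2 C' hC' ⟨C, ⟨hC, fun h => hne' h.symm⟩, huC⟩
      obtain ⟨I, hI⟩ := M.exists_isBasis X hXE
      have hIU : M.IsBasis I U := hI.indep.isBasis_of_subset_of_subset_closure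
        (hI.subset.trans diff_subset)
        (by rw [← hI.closure_eq_closure]  at hUcl; exact hUcl)
      have hrkU : rk M U = I.ncard := rk_eq_ncard_of_basis hM hIU
      have hTcard : T.ncard = Cs.ncard := ncard_image_of_injOn hinj
      have hXcard : X.ncard + T.ncard = U.ncard := ncard_diff_add_ncard_of_subset hTU hUfin
      have hIX : I = X := by
        refine eq_of_subset_of_ncard_le hI.subset ?_ (hUfin.subset diff_subset)
        omega
      have hXindep : M.Indep X := hIX ▸ hI.indep
      obtain ⟨B, hB, hXB⟩ := hXindep.exists_isBase_superset
      refine ⟨B, hB, fun C hC => ?_⟩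
      have hxB : x C ∉ B := by
        intro hxB
        have hxT : x C ∈ T := ⟨C, hC, rfl⟩
        have hdep : M.Dep (insert (x C) X) := hXindep.insert_dep_iff.mpr
          ⟨hUcl ⟨C, hC, hx1 C hC⟩, fun h => h.2 hxT⟩
        exact hdep.not_indep (hB.indep.subset (insert_subset hxB hXB))
      have hsub : C ⊆ insert (x C) B := by
        intro y hy
        rcases eq_or_ne y (x C) with rfl | hne
        · exact mem_insert _ _
        · exact Or.inr (hXB (hdiff C hC ⟨hy, hne⟩))
      exact ⟨x C, hxB, hsub, fun C' h1 h2 => fund_unique hB h1 (hcirc C hC) h2 hsub⟩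
    · rintro ⟨B, hB, h⟩
      choose! e he1 he2 he3 using h
      have heC : ∀ C ∈ Cs, e C ∈ C := by
        intro C hC
        by_contra hno
        exact (hcirc C hC).1.not_indep (hB.indep.subset fun y hy =>
          ((he2 C hC hy).resolve_left fun h' => hno (h' ▸ hy)))
      have hinj : InjOn e Cs := fun C hC C' hC' hee =>
        he3 C' hC' C (hcirc C hC) (hee ▸ he2 C hC)
      have hnotin : ∀ C ∈ Cs, ∀ C' ∈ Cs, C ≠ C' → e C ∉ C' := by
        intro C hC C' hC' hne hmem
        rcases he2 C' hC' hmem with h' | h'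
        · exact hne (hinj hC hC' h')
        · exact he1 C hC h'
      set U := ⋃₀ Cs with hU
      have hUE : U ⊆ M.E := sUnion_subset fun C hC => (hcirc C hC).1.subset_ground
      have hUfin : U.Finite := hM.subset hUE
      set T := e '' Cs with hT
      have hTU : T ⊆ U := by rintro _ ⟨C, hC, rfl⟩; exact ⟨C, hC, heC C hC⟩
      set X := U \ T with hX
      have hXE : X ⊆ M.E := diff_subset.trans hUE
      have hXB : X ⊆ B := by
        rintro y ⟨⟨C, hC, hyC⟩, hyT⟩
        rcases he2 C hC hyC with h' | h'
        · exact absurd ⟨C, hC, h'.symm⟩ hyT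
        · exact h'
      have hdiff : ∀ C ∈ Cs, C \ {e C} ⊆ X := by
        rintro C hC y ⟨hyC, hye⟩
        refine ⟨⟨C, hC, hyC⟩, ?_⟩
        rintro ⟨C', hC', rfl⟩
        rcases eq_or_ne C' C with rfl | hne
        · exact hye rfl
        · exact hnotin C' hC' C hC hne hyC
      have hUcl : U ⊆ M.closure X := by
        rintro u ⟨C, hC, huC⟩
        rcases eq_or_ne u (e C) with rfl | hne
        · exact M.closure_subset_closure (hdiff C hC) (circuit_mem_closure_diff (hcirc C hC) (by exact huC))
        · refine M.subset_closure X hXE ⟨⟨C, hC, huC⟩, ?_⟩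
          rintro ⟨C', hC', rfl⟩
          rcases eq_or_ne C' C with rfl | hne'
          · exact hne rfl
          · exact hnotin C' hC' C hC hne' huC
      have hXindep : M.Indep X := hB.indep.subset hXB
      have hbasis : M.IsBasis X U := hXindep.isBasis_of_subset_of_subset_closure diff_subset hUcl
      have hrk : rk M U = X.ncard := rk_eq_ncard_of_basis hM hbasis
      have hTcard : T.ncard = Cs.ncard := ncard_image_of_injOn hinj
      have hXcard : X.ncard + T.ncard = U.ncard := ncard_diff_add_ncard_of_subset hTU hUfin
      refine ⟨hfin, hcirc, by rw [← hU]; omega, ?_⟩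
      intro C hC hsub
      obtain ⟨C', hC'mem, hmem⟩ := hsub (heC C hC)
      exact hnotin C hC C' hC'mem.1 (fun h' => hC'mem.2 h'.symm) hmem


end PaperLift
end

section
/- Let M be a matroid, let 𝒞' be a perfect collection of circuits of M, and let 𝒞'' ⊆ 𝒞'. Then 𝒞'' is a perfect collection of circuits of M. -/
open Set Matroid
open scoped Matroid

namespace PaperLift

variable {α : Type} {β : Type}

/-- rk equals the cardinality of any basis. -/
lemma rk_eq_basis_ncard {M : Matroid α} (hM : M.E.Finite) {I X : Set α}
    (hI : M.IsBasis' I X) : rk M X = I.ncard := by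
  have hgreat : IsGreatest {n | ∃ J, M.Indep J ∧ J ⊆ X ∧ J.ncard = n} I.ncard := by
    constructor
    · exact ⟨I, hI.indep, hI.subset, rfl⟩
    · rintro n ⟨J, hJ, hJX, rfl⟩
      obtain ⟨J', hJ', hJJ'⟩ := hJ.subset_isBasis'_of_subset hJX
      have h1 : J.ncard ≤ J'.ncard :=
        Set.ncard_le_ncard hJJ' (hM.subset hJ'.indep.subset_ground)
      have h2 : J'.encard = I.encard := hJ'.encard_eq_encard hI
      have h3 : J'.ncard = I.ncard := by
        rw [Set.ncard_def, Set.ncard_def, h2]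
      omega
  exact hgreat.csSup_eq

lemma rk_empty_s14 (M : Matroid α) (hM : M.E.Finite) : rk M (∅ : Set α) = 0 := by
  have h : M.IsBasis' (∅ : Set α) (∅ : Set α) :=
    (M.empty_indep.isBasis_self).isBasis'
  rw [rk_eq_basis_ncard hM h, Set.ncard_empty]

/-- The key step: adding a circuit not contained in `Y` increases nullity. -/
lemma rk_step {M : Matroid α} (hM : M.E.Finite) {C Y : Set α}
    (hC : Circuit M C) (hY : Y ⊆ M.E) (hCY : ¬ C ⊆ Y) :
    rk M (Y ∪ C) + 1 ≤ rk M Y + (C \ Y).ncard := by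
  have hCE : C ⊆ M.E := hC.1.subset_ground
  obtain ⟨I, hI⟩ := M.exists_isBasis Y hY
  obtain ⟨I', hI', hII'⟩ := hI.indep.subset_isBasis_of_subset
    (hI.subset.trans subset_union_left) (union_subset hY hCE)
  have hinter : I' ∩ Y = I := by
    refine (hI.eq_of_subset_indep (hI'.indep.subset inter_subset_left)
      (subset_inter hII' hI.subset) inter_subset_right).symm
  have hdiff : I' \ I ⊆ C \ Y := by
    rintro x ⟨hxI', hxI⟩
    rcases hI'.subset hxI' with hxY | hxC
    · exact absurd (hinter ▸ ⟨hxI', hxY⟩) hxI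
    · refine ⟨hxC, fun hxY => hxI (hinter ▸ ⟨hxI', hxY⟩)⟩
  have hne : I' \ I ≠ C \ Y := by
    intro heq
    obtain ⟨e, heC, heY⟩ := Set.not_subset.mp hCY
    have heI' : e ∈ I' := by
      have : e ∈ I' \ I := by rw [heq]; exact ⟨heC, heY⟩
      exact this.1
    have heI : e ∉ I := fun h => heY (hI.subset h)
    -- e ∈ closure (C \ {e})
    have hCe : M.Indep (C \ {e}) := hC.2 _ (Set.sdiff_singleton_ssubset.mpr heC)
    have hecl : e ∈ M.closure (C \ {e}) := by
      rw [hCe.mem_closure_iff]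
      left
      rw [Set.insert_diff_singleton, Set.insert_eq_of_mem heC]
      exact hC.1
    -- C \ {e} ⊆ closure (I' \ {e})
    have hsub2 : C \ {e} ⊆ M.closure (I' \ {e}) := by
      rintro x ⟨hxC, hxe⟩
      by_cases hxY : x ∈ Y
      · have : x ∈ M.closure I := hI.subset_closure hxY
        refine M.closure_subset_closure ?_ this
        rintro y hy
        exact ⟨hII' hy, fun h => heI (h ▸ hy)⟩
      · have hxI' : x ∈ I' := by
          have : x ∈ I' \ I := by rw [heq]; exact ⟨hxC, hxY⟩
          exact this.1
        exact M.subset_closure _ (fun y hy => hI'.indep.subset_ground hy.1) ⟨hxI', hxe⟩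
    have : e ∈ M.closure (I' \ {e}) := by
      exact M.closure_subset_closure_of_subset_closure hsub2 hecl
    exact hI'.indep.notMem_closure_diff_of_mem heI' this
  have hss : I' \ I ⊂ C \ Y := ssubset_of_subset_of_ne hdiff hne
  have hlt : (I' \ I).ncard < (C \ Y).ncard :=
    Set.ncard_lt_ncard hss (hM.subset (fun x hx => hCE hx.1))
  have hIcard : I'.ncard = I.ncard + (I' \ I).ncard := by
    rw [← Set.ncard_union_eq disjoint_sdiff_right
      (hM.subset hI.indep.subset_ground)
      (hM.subset (fun x hx => hI'.indep.subset_ground hx.1)),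
      Set.union_diff_cancel hII']
  rw [rk_eq_basis_ncard hM hI'.isBasis', rk_eq_basis_ncard hM hI.isBasis']
  omega

/-- Main induction: growing a collection of circuits over a base set `Y`. -/
lemma rk_ind {M : Matroid α} (hM : M.E.Finite) (Y : Set α) (hY : Y ⊆ M.E)
    (Ds : Set (Set α)) (hDs : Ds.Finite) :
    (∀ C ∈ Ds, Circuit M C) →
    (∀ C ∈ Ds, ¬ C ⊆ Y ∪ ⋃₀ (Ds \ {C})) →
    rk M (Y ∪ ⋃₀ Ds) + Ds.ncard + Y.ncard ≤ rk M Y + (Y ∪ ⋃₀ Ds).ncard := by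
  refine Set.Finite.induction_on (motive := fun Ds _ =>
      (∀ C ∈ Ds, Circuit M C) →
      (∀ C ∈ Ds, ¬ C ⊆ Y ∪ ⋃₀ (Ds \ {C})) →
      rk M (Y ∪ ⋃₀ Ds) + Ds.ncard + Y.ncard ≤ rk M Y + (Y ∪ ⋃₀ Ds).ncard)
    Ds hDs (by simp) ?_
  intro C Ds hCDs hDsfin IH hcirc hpriv
  have hC : Circuit M C := hcirc C (mem_insert _ _)
  have hDsE : ⋃₀ Ds ⊆ M.E := by
    rintro x ⟨D, hD, hx⟩
    exact (hcirc D (mem_insert_of_mem _ hD)).1.subset_ground hx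
  set Y₀ := Y ∪ ⋃₀ Ds with hY₀
  have hY₀E : Y₀ ⊆ M.E := union_subset hY hDsE
  have hY₀fin : Y₀.Finite := hM.subset hY₀E
  have hCY₀ : ¬ C ⊆ Y₀ := by
    have := hpriv C (mem_insert _ _)
    rwa [show insert C Ds \ {C} = Ds by simp [Set.insert_diff_of_mem, hCDs]] at this
  have hstep := rk_step hM hC hY₀E hCY₀
  have hIH := IH (fun D hD => hcirc D (mem_insert_of_mem _ hD))
    (fun D hD hsub => hpriv D (mem_insert_of_mem _ hD)
      (hsub.trans (union_subset_union_right _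
        (sUnion_subset_sUnion (Set.diff_subset_diff_left (subset_insert _ _))))))
  have hU : Y ∪ ⋃₀ insert C Ds = Y₀ ∪ C := by
    rw [hY₀, Set.sUnion_insert]
    ext x; simp [or_comm, or_assoc, or_left_comm]
  have hcard : (Y₀ ∪ C).ncard = Y₀.ncard + (C \ Y₀).ncard := by
    rw [← Set.ncard_union_eq disjoint_sdiff_right hY₀fin
      (hM.subset (fun x hx => hC.1.subset_ground hx.1)), Set.union_diff_self]
  have hncard : (insert C Ds).ncard = Ds.ncard + 1 :=
    Set.ncard_insert_of_notMem hCDs hDsfin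
  rw [hU, hcard, hncard]
  omega


/-- Every subset of a perfect collection of circuits is perfect. -/
theorem stmt14 {α : Type} (M : Matroid α) (hM : M.E.Finite)
    (Cs Cs' : Set (Set α)) (h : Perfect M Cs) (hsub : Cs' ⊆ Cs) :
    Perfect M Cs' := by
  obtain ⟨hfin, hcirc, heq, hpriv⟩ := h
  have hfin' : Cs'.Finite := hfin.subset hsub
  have hcirc' : ∀ C ∈ Cs', Circuit M C := fun C hC => hcirc C (hsub hC)
  have hpriv' : ∀ C ∈ Cs', ¬ C ⊆ ⋃₀ (Cs' \ {C}) := fun C hC hcon =>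
    hpriv C (hsub hC) (hcon.trans (sUnion_subset_sUnion (diff_subset_diff_left hsub)))
  have hE' : ⋃₀ Cs' ⊆ M.E := by
    rintro x ⟨D, hD, hx⟩; exact (hcirc' D hD).1.subset_ground hx
  have hE : ⋃₀ Cs ⊆ M.E := by
    rintro x ⟨D, hD, hx⟩; exact (hcirc D hD).1.subset_ground hx
  -- lower bound: apply rk_ind with Y = ∅, Ds = Cs'
  have h1 := rk_ind hM ∅ (empty_subset _) Cs' hfin' hcirc'
    (by intro C hC hcon; exact hpriv' C hC (hcon.trans (by simp)))
  rw [rk_empty_s14 M hM] at h1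
  simp only [Set.empty_union, Set.ncard_empty, add_zero, zero_add] at h1
  -- upper bound: apply rk_ind with Y = ⋃₀ Cs', Ds = Cs \ Cs'
  have h2 := rk_ind hM (⋃₀ Cs') hE' (Cs \ Cs') (hfin.subset diff_subset)
    (fun C hC => hcirc C hC.1)
    (by
      intro C hC hcon
      refine hpriv C hC.1 (hcon.trans ?_)
      apply union_subset
      · exact sUnion_subset_sUnion (fun D hD => ⟨hsub hD, fun h => hC.2 (h ▸ hD)⟩)
      · exact sUnion_subset_sUnion (diff_subset_diff_left diff_subset))
  have hU : ⋃₀ Cs' ∪ ⋃₀ (Cs \ Cs') = ⋃₀ Cs := by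
    rw [← Set.sUnion_union, Set.union_diff_cancel hsub]
  rw [hU] at h2
  have hncards : Cs.ncard = Cs'.ncard + (Cs \ Cs').ncard := by
    rw [← Set.ncard_union_eq disjoint_sdiff_right hfin' (hfin.subset diff_subset),
      Set.union_diff_cancel hsub]
  have hfinU' : (⋃₀ Cs').Finite := hM.subset hE'
  have hfinU : (⋃₀ Cs).Finite := hM.subset hE
  have hle : (⋃₀ Cs').ncard ≤ (⋃₀ Cs).ncard :=
    Set.ncard_le_ncard (sUnion_subset_sUnion hsub) hfinU
  refine ⟨hfin', hcirc', ?_, hpriv'⟩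
  omega


end PaperLift
end
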